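/- arXiv:2308.10303 — 5 statements merged into one kernel-verified Lean document; each statement's English description precedes it below -/
import Mathlib

section
/- For vectors X, Y in a real inner product space and 1 ≤ p ≤ 2, one has ‖X+Y‖^p - ‖X‖^p ≥ (p(p-1)/2)·‖Y‖²/(‖X‖+‖Y‖)^(2-p) + p‖X‖^(p-2)⟨X,Y⟩, where the middle term is interpreted as 0 when X = Y = 0 and the last term as 0 when X = 0. -/
open RealInnerProductSpace

open Real Set in
private lemma mono_aux {f f' : ℝ → ℝ} {s e : ℝ} (hse : s ≤ e)
    (hd : ∀ x ∈ Icc s e, HasDerivAt f (f' x) x)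
    (h0 : ∀ x ∈ Ioo s e, 0 ≤ f' x) : f s ≤ f e := by
  have hmono : MonotoneOn f (Icc s e) := by
    apply monotoneOn_of_deriv_nonneg (convex_Icc s e)
    · exact fun x hx => (hd x hx).continuousAt.continuousWithinAt
    · intro x hx
      rw [interior_Icc] at hx
      exact ((hd x (Ioo_subset_Icc_self hx)).differentiableAt).differentiableWithinAt
    · intro x hx
      rw [interior_Icc] at hx
      rw [(hd x (Ioo_subset_Icc_self hx)).deriv]
      exact h0 x hx
  exact hmono (left_mem_Icc.2 hse) (right_mem_Icc.2 hse) hse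

open Real Set in
private lemma anti_aux {f f' : ℝ → ℝ} {s e : ℝ} (hse : s ≤ e)
    (hd : ∀ x ∈ Icc s e, HasDerivAt f (f' x) x)
    (h0 : ∀ x ∈ Ioo s e, f' x ≤ 0) : f e ≤ f s := by
  have key := mono_aux (f := fun x => -f x) (f' := fun x => -f' x) hse
    (fun x hx => (hd x hx).neg) (fun x hx => neg_nonneg.2 (h0 x hx))
  simp only [neg_le_neg_iff] at key
  exact key

open Real Set in
/-- tangent line inequality for concave power function with exponent `p-1 ∈ [0,1]`. -/
private lemma tangent_aux {p x y : ℝ} (hp1 : 1 ≤ p) (hp2 : p ≤ 2) (hx : 0 < x)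
    (hxy : x ≤ y) : (p - 1) * y ^ (p - 2) * (y - x) ≤ y ^ (p - 1) - x ^ (p - 1) := by
  have hy : 0 < y := hx.trans_le hxy
  have key : (fun t : ℝ => y ^ (p-1) - t ^ (p-1) - (p-1) * y ^ (p-2) * (y - t)) y
      ≤ (fun t : ℝ => y ^ (p-1) - t ^ (p-1) - (p-1) * y ^ (p-2) * (y - t)) x := by
    apply anti_aux (f := fun t : ℝ => y ^ (p-1) - t ^ (p-1) - (p-1) * y ^ (p-2) * (y - t))
      (f' := fun t => -((p-1) * t ^ (p-2)) + (p-1) * y ^ (p-2) * 1) hxy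
    · intro t ht
      have ht0 : t ≠ 0 := (hx.trans_le ht.1).ne'
      have h1 : HasDerivAt (fun t : ℝ => t ^ (p-1)) ((p-1) * t ^ (p-1-1)) t :=
        Real.hasDerivAt_rpow_const (Or.inl ht0)
      rw [show p-1-1 = p-2 by ring] at h1
      have h2 : HasDerivAt (fun t : ℝ => (p-1) * y ^ (p-2) * (y - t))
          ((p-1) * y ^ (p-2) * (-1)) t := ((hasDerivAt_id t).const_sub y).const_mul _
      have := ((hasDerivAt_const t (y ^ (p-1))).fun_sub h1).fun_sub h2
      refine this.congr_deriv ?_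
      ring
    · intro t ht
      have ht0 : 0 < t := hx.trans ht.1
      have hmono : y ^ (p-2) ≤ t ^ (p-2) :=
        Real.rpow_le_rpow_of_nonpos ht0 ht.2.le (by linarith)
      nlinarith [hmono, hp1]
  simp only [sub_self, mul_zero, sub_zero] at key
  linarith [key]

open Real Set in
/-- second order Taylor lower bound, right-hand version. -/
private lemma phiR {p a u : ℝ} (hp1 : 1 ≤ p) (hp2 : p ≤ 2) (ha : 0 < a) (hau : a ≤ u) :
    a ^ p + p * a ^ (p-1) * (u - a) + (p * (p-1) / 2) * u ^ (p-2) * (u - a) ^ 2 ≤ u ^ p := by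
  set K : ℝ := (p * (p-1) / 2) * u ^ (p-2) with hK
  have key : (fun x : ℝ => x ^ p - a ^ p - p * a ^ (p-1) * (x - a) - K * (x - a) ^ 2) a
      ≤ (fun x : ℝ => x ^ p - a ^ p - p * a ^ (p-1) * (x - a) - K * (x - a) ^ 2) u := by
    apply mono_aux (f := fun x : ℝ => x ^ p - a ^ p - p * a ^ (p-1) * (x - a) - K * (x - a) ^ 2)
      (f' := fun x => p * x ^ (p-1) - p * a ^ (p-1) - K * (2 * (x - a))) hau
    · intro x hx
      have hx0 : x ≠ 0 := (ha.trans_le hx.1).ne'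
      have h1 : HasDerivAt (fun y : ℝ => y ^ p) (p * x ^ (p-1)) x :=
        Real.hasDerivAt_rpow_const (Or.inl hx0)
      have h2 : HasDerivAt (fun y : ℝ => y - a) 1 x := (hasDerivAt_id x).sub_const a
      have h3 : HasDerivAt (fun y : ℝ => (y - a) ^ 2) (2 * (x - a)) x := by
        simpa using h2.fun_pow 2
      have := ((h1.sub_const (a ^ p)).fun_sub (h2.const_mul (p * a ^ (p-1)))).fun_sub (h3.const_mul K)
      refine this.congr_deriv ?_
      ring
    · intro x hx
      have hx0 : 0 < x := ha.trans hx.1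
      have ht := tangent_aux hp1 hp2 ha hx.1.le (y := x)
      have hmono : u ^ (p-2) ≤ x ^ (p-2) :=
        Real.rpow_le_rpow_of_nonpos hx0 hx.2.le (by linarith)
      have hprod : (p-1) * (x - a) * u ^ (p-2) ≤ (p-1) * (x - a) * x ^ (p-2) :=
        mul_le_mul_of_nonneg_left hmono (by nlinarith [hx.1])
      have hp0 : (0:ℝ) ≤ p := by linarith
      have hmain : 0 ≤ p * (x ^ (p-1) - a ^ (p-1) - (p-1) * u ^ (p-2) * (x - a)) :=
        mul_nonneg hp0 (by nlinarith [ht, hprod])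
      rw [hK]
      nlinarith [hmain]
  have key' : a ^ p - a ^ p - p * a ^ (p-1) * (a - a) - K * (a - a) ^ 2
      ≤ u ^ p - a ^ p - p * a ^ (p-1) * (u - a) - K * (u - a) ^ 2 := key
  rw [hK] at key'
  nlinarith [key']

open Real Set in
/-- second order Taylor lower bound, left-hand version. -/
private lemma phiL {p a u x : ℝ} (hp1 : 1 ≤ p) (hp2 : p ≤ 2) (ha : 0 < a) (hau : a ≤ u)
    (hx0 : 0 ≤ x) (hxa : x ≤ a) :
    a ^ p + p * a ^ (p-1) * (x - a) + (p * (p-1) / 2) * u ^ (p-2) * (x - a) ^ 2 ≤ x ^ p := by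
  set K : ℝ := (p * (p-1) / 2) * u ^ (p-2) with hK
  have key : (fun y : ℝ => y ^ p - a ^ p - p * a ^ (p-1) * (y - a) - K * (y - a) ^ 2) a
      ≤ (fun y : ℝ => y ^ p - a ^ p - p * a ^ (p-1) * (y - a) - K * (y - a) ^ 2) x := by
    apply anti_aux (f := fun y : ℝ => y ^ p - a ^ p - p * a ^ (p-1) * (y - a) - K * (y - a) ^ 2)
      (f' := fun y => p * y ^ (p-1) - p * a ^ (p-1) - K * (2 * (y - a))) hxa
    · intro t ht
      have h1 : HasDerivAt (fun y : ℝ => y ^ p) (p * t ^ (p-1)) t :=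
        Real.hasDerivAt_rpow_const (Or.inr hp1)
      have h2 : HasDerivAt (fun y : ℝ => y - a) 1 t := (hasDerivAt_id t).sub_const a
      have h3 : HasDerivAt (fun y : ℝ => (y - a) ^ 2) (2 * (t - a)) t := by
        simpa using h2.fun_pow 2
      have := ((h1.sub_const (a ^ p)).fun_sub (h2.const_mul (p * a ^ (p-1)))).fun_sub (h3.const_mul K)
      refine this.congr_deriv ?_
      ring
    · intro t ht
      have ht0 : 0 < t := lt_of_le_of_lt hx0 ht.1
      have hT := tangent_aux hp1 hp2 ht0 ht.2.le (y := a)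
      have hmono : u ^ (p-2) ≤ a ^ (p-2) :=
        Real.rpow_le_rpow_of_nonpos ha hau (by linarith)
      have hprod : (p-1) * (a - t) * u ^ (p-2) ≤ (p-1) * (a - t) * a ^ (p-2) :=
        mul_le_mul_of_nonneg_left hmono (by nlinarith [ht.2])
      have hp0 : (0:ℝ) ≤ p := by linarith
      have hmain : 0 ≤ p * (a ^ (p-1) - t ^ (p-1) - (p-1) * u ^ (p-2) * (a - t)) :=
        mul_nonneg hp0 (by nlinarith [hT, hprod])
      rw [hK]
      nlinarith [hmain]
  have key' : a ^ p - a ^ p - p * a ^ (p-1) * (a - a) - K * (a - a) ^ 2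
      ≤ x ^ p - a ^ p - p * a ^ (p-1) * (x - a) - K * (x - a) ^ 2 := key
  nlinarith [key']

open Real Set in
/-- second order Taylor lower bound, crossing through zero version. -/
private lemma phiNeg {p a u y : ℝ} (hp1 : 1 ≤ p) (hp2 : p ≤ 2) (ha : 0 < a) (hy : 0 ≤ y)
    (hyu : a + y ≤ u) :
    a ^ p - p * a ^ (p-1) * (a + y) + (p * (p-1) / 2) * u ^ (p-2) * (a + y) ^ 2 ≤ y ^ p := by
  have hau : a ≤ u := by linarith
  have hu : 0 < u := lt_of_lt_of_le ha hau
  set K : ℝ := (p * (p-1) / 2) * u ^ (p-2) with hK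
  have hA1 : a ^ (p-1) = a ^ (p-2) * a := by
    rw [show p-1 = (p-2)+1 by ring, Real.rpow_add ha, Real.rpow_one]
  have hA0 : a ^ p = a ^ (p-2) * a ^ 2 := by
    have h := Real.rpow_add ha (p-2) 2
    rw [show p-2+2 = p by ring] at h
    rw [h, Real.rpow_two]
  have hmono : u ^ (p-2) ≤ a ^ (p-2) :=
    Real.rpow_le_rpow_of_nonpos ha hau (by linarith)
  have key : (fun t : ℝ => t ^ p - a ^ p + p * a ^ (p-1) * (a + t) - K * (a + t) ^ 2) 0
      ≤ (fun t : ℝ => t ^ p - a ^ p + p * a ^ (p-1) * (a + t) - K * (a + t) ^ 2) y := by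
    apply mono_aux (f := fun t : ℝ => t ^ p - a ^ p + p * a ^ (p-1) * (a + t) - K * (a + t) ^ 2)
      (f' := fun t => p * t ^ (p-1) + p * a ^ (p-1) - K * (2 * (a + t))) hy
    · intro t ht
      have h1 : HasDerivAt (fun s : ℝ => s ^ p) (p * t ^ (p-1)) t :=
        Real.hasDerivAt_rpow_const (Or.inr hp1)
      have h2 : HasDerivAt (fun s : ℝ => a + s) 1 t := (hasDerivAt_id t).const_add a
      have h3 : HasDerivAt (fun s : ℝ => (a + s) ^ 2) (2 * (a + t)) t := by
        simpa using h2.fun_pow 2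
      have := ((h1.sub_const (a ^ p)).fun_add (h2.const_mul (p * a ^ (p-1)))).fun_sub (h3.const_mul K)
      refine this.congr_deriv ?_
      ring
    · intro t ht
      have ht0 : 0 < t := ht.1
      have htu : t ≤ u := by nlinarith [ht.2, hyu, ha.le]
      have hT2 : t ^ (p-1) = t ^ (p-2) * t := by
        rw [show p-1 = (p-2)+1 by ring, Real.rpow_add ht0, Real.rpow_one]
      have hm2 : u ^ (p-2) ≤ t ^ (p-2) :=
        Real.rpow_le_rpow_of_nonpos ht0 htu (by linarith)
      have hp0 : (0:ℝ) ≤ p := by linarith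
      have h1 : (p-1) * (u ^ (p-2) * a) ≤ (p-1) * a ^ (p-1) := by
        rw [hA1]
        exact mul_le_mul_of_nonneg_left
          (mul_le_mul_of_nonneg_right hmono ha.le) (by linarith)
      have h2 : (p-1) * (u ^ (p-2) * t) ≤ (p-1) * t ^ (p-1) := by
        rw [hT2]
        exact mul_le_mul_of_nonneg_left
          (mul_le_mul_of_nonneg_right hm2 ht0.le) (by linarith)
      have ha1 : 0 ≤ a ^ (p-1) := Real.rpow_nonneg ha.le _
      have ht1 : 0 ≤ t ^ (p-1) := Real.rpow_nonneg ht0.le _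
      have hmain : 0 ≤ p * (t ^ (p-1) + a ^ (p-1) - (p-1) * u ^ (p-2) * (a + t)) :=
        mul_nonneg hp0 (by nlinarith [h1, h2, ha1, ht1])
      rw [hK]
      nlinarith [hmain]
  have key' : (0:ℝ) ^ p - a ^ p + p * a ^ (p-1) * (a + 0) - K * (a + 0) ^ 2
      ≤ y ^ p - a ^ p + p * a ^ (p-1) * (a + y) - K * (a + y) ^ 2 := key
  have hzero : (0:ℝ) ^ p = 0 := Real.zero_rpow (by linarith)
  have e1 : p * a ^ (p-1) * a = p * (a ^ (p-2) * a ^ 2) := by rw [hA1]; ring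
  have hap : 0 ≤ a ^ (p-2) := Real.rpow_nonneg ha.le _
  have h1 : K * a ^ 2 ≤ (p * (p-1) / 2) * (a ^ (p-2) * a ^ 2) := by
    rw [hK]
    have hc0 : 0 ≤ p * (p-1) / 2 := by nlinarith
    nlinarith [mul_le_mul_of_nonneg_right (mul_le_mul_of_nonneg_left hmono hc0) (sq_nonneg a)]
  have w : (0:ℝ) ≤ (p-1) * (2-p) := by nlinarith
  have e2 : p * (p-1) / 2 * (a ^ (p-2) * a ^ 2) ≤ (p-1) * (a ^ (p-2) * a ^ 2) := by
    nlinarith [mul_nonneg w (mul_nonneg hap (sq_nonneg a))]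
  linarith [key', hzero, e1, h1, e2, hA0]

open Real Set in
private lemma gMono {p a s t : ℝ} (hp1 : 1 ≤ p) (hp2 : p ≤ 2) (ha : 0 < a) (hs : 0 ≤ s)
    (hst : s ≤ t) (hta : t ≤ a) :
    s ^ p - (p/2) * a ^ (p-2) * s ^ 2 ≤ t ^ p - (p/2) * a ^ (p-2) * t ^ 2 := by
  have key : (fun x : ℝ => x ^ p - (p/2) * a ^ (p-2) * x ^ 2) s
      ≤ (fun x : ℝ => x ^ p - (p/2) * a ^ (p-2) * x ^ 2) t := by
    apply mono_aux (f := fun x : ℝ => x ^ p - (p/2) * a ^ (p-2) * x ^ 2)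
      (f' := fun x => p * x ^ (p-1) - (p/2) * a ^ (p-2) * (2 * x)) hst
    · intro x hx
      have h1 : HasDerivAt (fun y : ℝ => y ^ p) (p * x ^ (p-1)) x :=
        Real.hasDerivAt_rpow_const (Or.inr hp1)
      have h2 : HasDerivAt (fun y : ℝ => y ^ 2) (2 * x) x := by
        simpa using (hasDerivAt_id x).fun_pow 2
      exact h1.sub (h2.const_mul _)
    · intro x hx
      have hx0 : 0 < x := lt_of_le_of_lt hs hx.1
      have hX1 : x ^ (p-1) = x ^ (p-2) * x := by
        rw [show p-1 = (p-2)+1 by ring, Real.rpow_add hx0, Real.rpow_one]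
      have hm : a ^ (p-2) ≤ x ^ (p-2) :=
        Real.rpow_le_rpow_of_nonpos hx0 (le_trans hx.2.le hta) (by linarith)
      have hp0 : (0:ℝ) ≤ p := by linarith
      have hmm : a ^ (p-2) * x ≤ x ^ (p-2) * x := mul_le_mul_of_nonneg_right hm hx0.le
      nlinarith [hmm, hX1, hp0, mul_le_mul_of_nonneg_left hmm hp0]
  exact key

open Real Set in
private lemma gAnti {p a t u : ℝ} (hp1 : 1 ≤ p) (hp2 : p ≤ 2) (ha : 0 < a)
    (hat : a ≤ t) (htu : t ≤ u) :
    u ^ p - (p/2) * a ^ (p-2) * u ^ 2 ≤ t ^ p - (p/2) * a ^ (p-2) * t ^ 2 := by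
  have key : (fun x : ℝ => x ^ p - (p/2) * a ^ (p-2) * x ^ 2) u
      ≤ (fun x : ℝ => x ^ p - (p/2) * a ^ (p-2) * x ^ 2) t := by
    apply anti_aux (f := fun x : ℝ => x ^ p - (p/2) * a ^ (p-2) * x ^ 2)
      (f' := fun x => p * x ^ (p-1) - (p/2) * a ^ (p-2) * (2 * x)) htu
    · intro x hx
      have h1 : HasDerivAt (fun y : ℝ => y ^ p) (p * x ^ (p-1)) x :=
        Real.hasDerivAt_rpow_const (Or.inr hp1)
      have h2 : HasDerivAt (fun y : ℝ => y ^ 2) (2 * x) x := by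
        simpa using (hasDerivAt_id x).fun_pow 2
      exact h1.sub (h2.const_mul _)
    · intro x hx
      have hx0 : 0 < x := lt_of_lt_of_le ha (le_trans hat hx.1.le)
      have hX1 : x ^ (p-1) = x ^ (p-2) * x := by
        rw [show p-1 = (p-2)+1 by ring, Real.rpow_add hx0, Real.rpow_one]
      have hm : x ^ (p-2) ≤ a ^ (p-2) :=
        Real.rpow_le_rpow_of_nonpos ha (le_trans hat hx.1.le) (by linarith)
      have hp0 : (0:ℝ) ≤ p := by linarith
      have hmm : x ^ (p-2) * x ≤ a ^ (p-2) * x := mul_le_mul_of_nonneg_right hm hx0.le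
      nlinarith [hmm, hX1, hp0, mul_le_mul_of_nonneg_left hmm hp0]
  exact key

theorem stmt_1 {H : Type*} [NormedAddCommGroup H] [InnerProductSpace ℝ H]
    (X Y : H) (p : ℝ) (hp1 : 1 ≤ p) (hp2 : p ≤ 2) :
    ‖X + Y‖ ^ p - ‖X‖ ^ p ≥
      (p * (p - 1) / 2) * ‖Y‖ ^ (2 : ℕ) / (‖X‖ + ‖Y‖) ^ (2 - p)
        + p * ‖X‖ ^ (p - 2) * ⟪X, Y⟫ := by
  have hp0 : p ≠ 0 := by linarith
  rcases eq_or_lt_of_le (norm_nonneg X) with h0 | ha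
  · -- X = 0
    have hX : X = 0 := norm_eq_zero.1 h0.symm
    subst hX
    simp only [zero_add, norm_zero, inner_zero_left, mul_zero, add_zero]
    rw [Real.zero_rpow hp0, sub_zero]
    rcases eq_or_lt_of_le (norm_nonneg Y) with hb0 | hb
    · rw [← hb0, Real.zero_rpow hp0]
      norm_num
    · have hb2 : ‖Y‖ ^ (2:ℕ) = ‖Y‖ ^ (2:ℝ) := (Real.rpow_two ‖Y‖).symm
      rw [hb2, mul_div_assoc, ← Real.rpow_sub hb]
      rw [show (2:ℝ) - (2 - p) = p by ring]
      have hbp : 0 ≤ ‖Y‖ ^ p := Real.rpow_nonneg (norm_nonneg Y) p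
      have hC : p * (p - 1) / 2 ≤ 1 := by nlinarith
      nlinarith [mul_le_mul_of_nonneg_right hC hbp]
  · -- X ≠ 0
    have hb0 : (0:ℝ) ≤ ‖Y‖ := norm_nonneg Y
    have hu : (0:ℝ) < ‖X‖ + ‖Y‖ := by linarith
    have hinv : (‖X‖ + ‖Y‖) ^ (p-2) = ((‖X‖ + ‖Y‖) ^ (2-p))⁻¹ := by
      rw [show p-2 = -(2-p) by ring, Real.rpow_neg hu.le]
    have hdiv : p * (p - 1) / 2 * ‖Y‖ ^ (2:ℕ) / (‖X‖ + ‖Y‖) ^ (2 - p)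
        = p * (p - 1) / 2 * (‖X‖ + ‖Y‖) ^ (p-2) * ‖Y‖ ^ 2 := by
      rw [hinv]; ring
    rw [ge_iff_le, hdiv]
    have hts : ‖X + Y‖ ^ 2 = ‖X‖ ^ 2 + 2 * ⟪X, Y⟫ + ‖Y‖ ^ 2 := norm_add_sq_real X Y
    have hc : ⟪X, Y⟫ = (‖X + Y‖ ^ 2 - ‖X‖ ^ 2 - ‖Y‖ ^ 2) / 2 := by linarith
    rw [hc]
    have htu : ‖X + Y‖ ≤ ‖X‖ + ‖Y‖ := norm_add_le X Y
    have hvt : |‖X‖ - ‖Y‖| ≤ ‖X + Y‖ := by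
      have h := abs_norm_sub_norm_le X (-Y)
      rw [norm_neg, sub_neg_eq_add] at h
      exact h
    have hA1 : ‖X‖ ^ (p-1) = ‖X‖ ^ (p-2) * ‖X‖ := by
      rw [show p-1 = (p-2)+1 by ring, Real.rpow_add ha, Real.rpow_one]
    rcases le_total ‖X + Y‖ ‖X‖ with hta | hat
    · have hs0 : (0:ℝ) ≤ |‖X‖ - ‖Y‖| := abs_nonneg _
      have I1 := gMono hp1 hp2 ha hs0 hvt hta
      have hs2 : |‖X‖ - ‖Y‖| ^ 2 = ‖X‖ ^ 2 - 2 * (‖X‖ * ‖Y‖) + ‖Y‖ ^ 2 := by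
        rw [sq_abs]; ring
      rw [hs2] at I1
      have I2 : ‖X‖ ^ p - p * (‖X‖ ^ (p-2) * ‖X‖) * ‖Y‖
          + (p * (p-1) / 2) * (‖X‖ + ‖Y‖) ^ (p-2) * ‖Y‖ ^ 2 ≤ |‖X‖ - ‖Y‖| ^ p := by
        rcases le_total ‖Y‖ ‖X‖ with hba | hab
        · have habs : |‖X‖ - ‖Y‖| = ‖X‖ - ‖Y‖ := abs_of_nonneg (by linarith)
          rw [habs]
          have h := phiL hp1 hp2 ha (by linarith : ‖X‖ ≤ ‖X‖ + ‖Y‖)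
            (by linarith : (0:ℝ) ≤ ‖X‖ - ‖Y‖) (by linarith : ‖X‖ - ‖Y‖ ≤ ‖X‖)
          rw [hA1] at h
          nlinarith [h]
        · have habs : |‖X‖ - ‖Y‖| = ‖Y‖ - ‖X‖ := by
            rw [abs_of_nonpos (by linarith)]; ring
          rw [habs]
          have h := phiNeg hp1 hp2 ha (by linarith : (0:ℝ) ≤ ‖Y‖ - ‖X‖)
            (by linarith : ‖X‖ + (‖Y‖ - ‖X‖) ≤ ‖X‖ + ‖Y‖)
          rw [hA1] at h
          nlinarith [h]
      linarith [I1, I2]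
    · have I1 := gAnti hp1 hp2 ha hat htu
      have hu2 : (‖X‖ + ‖Y‖) ^ 2 = ‖X‖ ^ 2 + 2 * (‖X‖ * ‖Y‖) + ‖Y‖ ^ 2 := by ring
      rw [hu2] at I1
      have I2 := phiR hp1 hp2 ha (by linarith : ‖X‖ ≤ ‖X‖ + ‖Y‖)
      rw [show ‖X‖ + ‖Y‖ - ‖X‖ = ‖Y‖ by ring, hA1] at I2
      linarith [I1, I2]
end

section
/- For vectors X, Y in a real inner product space and p ≥ 2, there exists a constant C(p) > 0 (depending only on p) such that ‖X+Y‖^p - ‖X‖^p ≥ C(p)‖Y‖^p + p‖X‖^(p-2)⟨X,Y⟩ for all X, Y. -/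
open RealInnerProductSpace

/-- Tangent line inequality for rpow: for `q ≥ 1`, `s > 0`, `x ≥ 0`,
`s^q + q s^(q-1) (x - s) ≤ x^q`. -/
lemma tangent_rpow {q s x : ℝ} (hq : 1 ≤ q) (hs : 0 < s) (hx : 0 ≤ x) :
    s ^ q + q * s ^ (q - 1) * (x - s) ≤ x ^ q := by
  have hz : -1 ≤ x / s - 1 := by
    have : 0 ≤ x / s := div_nonneg hx hs.le
    linarith
  have hb := one_add_mul_self_le_rpow_one_add hz hq
  have h1 : (1 + (x / s - 1)) ^ q = x ^ q / s ^ q := by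
    rw [show 1 + (x / s - 1) = x / s by ring, Real.div_rpow hx hs.le]
  rw [h1] at hb
  have hsq : 0 < s ^ q := Real.rpow_pos_of_pos hs q
  have key : (1 + q * (x / s - 1)) * s ^ q ≤ x ^ q := by
    calc (1 + q * (x / s - 1)) * s ^ q ≤ (x ^ q / s ^ q) * s ^ q := by
          exact mul_le_mul_of_nonneg_right hb hsq.le
      _ = x ^ q := div_mul_cancel₀ _ hsq.ne'
  have hexp : s ^ q = s ^ (q - 1) * s := by
    rw [← Real.rpow_add_one hs.ne' (q - 1)]; ring_nf
  calc s ^ q + q * s ^ (q - 1) * (x - s)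
      = (1 + q * (x / s - 1)) * s ^ q := by
        rw [hexp]; field_simp
    _ ≤ x ^ q := key

lemma sq_rpow {a : ℝ} (ha : 0 ≤ a) (r : ℝ) : ((a ^ 2 : ℝ)) ^ r = a ^ (2 * r) := by
  rw [← Real.rpow_natCast a 2, ← Real.rpow_mul ha]
  norm_num

/-- Scalar version of the p-uniform convexity inequality. -/
lemma scalar_key {p a b t : ℝ} (hp : 2 ≤ p) (ha : 0 ≤ a) (hb : 0 ≤ b)
    (ht : |t| ≤ a * b) :
    a ^ p + p * a ^ (p - 2) * t + (2:ℝ) ^ (-p) * b ^ p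
      ≤ (a ^ 2 + 2 * t + b ^ 2) ^ (p / 2) := by
  obtain ⟨ht1, ht2⟩ := abs_le.mp ht
  have hq : (1:ℝ) ≤ p / 2 := by linarith
  have hp0 : (0:ℝ) < p := by linarith
  have hCle1 : (2:ℝ) ^ (-p) ≤ 1 :=
    Real.rpow_le_one_of_one_le_of_nonpos (by norm_num) (by linarith)
  have hC0 : (0:ℝ) < (2:ℝ) ^ (-p) := Real.rpow_pos_of_pos (by norm_num) _
  have hS0 : 0 ≤ a ^ 2 + 2 * t + b ^ 2 := by nlinarith [sq_nonneg (a - b)]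
  rcases eq_or_lt_of_le ha with ha0 | ha0
  · -- a = 0, hence t = 0
    have hab : a * b = 0 := by rw [← ha0]; ring
    have ht0 : t = 0 := le_antisymm (hab ▸ ht2) (by linarith [hab ▸ ht1])
    subst ht0
    rw [← ha0]
    have h1 : (0:ℝ) ^ p = 0 := Real.zero_rpow hp0.ne'
    have h2 : ((0:ℝ) ^ 2 + 2 * 0 + b ^ 2) ^ (p / 2) = b ^ p := by
      rw [show (0:ℝ) ^ 2 + 2 * 0 + b ^ 2 = b ^ 2 by ring, sq_rpow hb,
        show 2 * (p / 2) = p by ring]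
    rw [h1, h2]
    nlinarith [mul_nonneg (sub_nonneg.mpr hCle1) (Real.rpow_nonneg hb p)]
  · have hPexp : (2:ℝ) * (p / 2) = p := by ring
    have hPexp2 : (2:ℝ) * (p / 2 - 1) = p - 2 := by ring
    have hap : 0 ≤ a ^ (p - 2) := Real.rpow_nonneg ha _
    rcases le_or_gt b (2 * a) with hb2 | hb2
    · -- case b ≤ 2a : tangent at a^2
      have hs : (0:ℝ) < a ^ 2 := by positivity
      have key := tangent_rpow hq hs hS0
      rw [sq_rpow ha, sq_rpow ha, hPexp, hPexp2] at key
      have hdiff : a ^ 2 + 2 * t + b ^ 2 - a ^ 2 = 2 * t + b ^ 2 := by ring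
      rw [hdiff] at key
      -- key : a ^ p + (p/2) * a ^ (p-2) * (2*t + b^2) ≤ S ^ (p/2)
      -- remains : 2^(-p) * b^p ≤ (p/2) * a^(p-2) * b^2
      have hrem : (2:ℝ) ^ (-p) * b ^ p ≤ (p / 2) * a ^ (p - 2) * b ^ 2 := by
        rcases eq_or_lt_of_le hb with hb0 | hb0
        · rw [← hb0, Real.zero_rpow hp0.ne']
          norm_num
        · have hbp : b ^ p = b ^ (p - 2) * b ^ 2 := by
            rw [← Real.rpow_natCast b 2, ← Real.rpow_add hb0]
            norm_num
          have hmono : b ^ (p - 2) ≤ (2 * a) ^ (p - 2) :=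
            Real.rpow_le_rpow hb hb2 (by linarith)
          have h2a : (2 * a) ^ (p - 2) = 2 ^ (p - 2) * a ^ (p - 2) :=
            Real.mul_rpow (by norm_num) ha
          have hcc : (2:ℝ) ^ (-p) * 2 ^ (p - 2) = 1 / 4 := by
            rw [← Real.rpow_add (by norm_num : (0:ℝ) < 2),
              show -p + (p - 2) = -2 by ring,
              show (-2:ℝ) = ((-2:ℤ):ℝ) by norm_num, Real.rpow_intCast]
            norm_num
          calc (2:ℝ) ^ (-p) * b ^ p = (2:ℝ) ^ (-p) * (b ^ (p - 2) * b ^ 2) := by rw [hbp]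
            _ ≤ (2:ℝ) ^ (-p) * (2 ^ (p - 2) * a ^ (p - 2) * b ^ 2) := by
                have := mul_le_mul_of_nonneg_right hmono (by positivity : (0:ℝ) ≤ b ^ 2)
                rw [h2a] at this
                exact mul_le_mul_of_nonneg_left this hC0.le
            _ = ((2:ℝ) ^ (-p) * 2 ^ (p - 2)) * (a ^ (p - 2) * b ^ 2) := by ring
            _ = (1 / 4) * (a ^ (p - 2) * b ^ 2) := by rw [hcc]
            _ ≤ (p / 2) * a ^ (p - 2) * b ^ 2 := by nlinarith [mul_nonneg hap (sq_nonneg b)]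
      have hE : p / 2 * a ^ (p - 2) * (2 * t + b ^ 2)
          = p * a ^ (p - 2) * t + p / 2 * a ^ (p - 2) * b ^ 2 := by ring
      rw [hE] at key
      linarith
    · -- case 2a < b : tangent at (b-a)^2
      have hba : 0 < b - a := by linarith
      have hs : (0:ℝ) < (b - a) ^ 2 := by positivity
      have key := tangent_rpow hq hs hS0
      rw [sq_rpow hba.le, sq_rpow hba.le, hPexp, hPexp2] at key
      have hdiff : a ^ 2 + 2 * t + b ^ 2 - (b - a) ^ 2 = 2 * (t + a * b) := by ring
      rw [hdiff] at key
      -- key : (b-a)^p + (p/2)*(b-a)^(p-2) * (2*(t + a*b)) ≤ S^(p/2)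
      have hf1 : 0 ≤ t + a * b := by linarith
      have hf2 : a ^ (p - 2) ≤ (b - a) ^ (p - 2) :=
        Real.rpow_le_rpow ha (by linarith) (by linarith)
      have hf3 : (2:ℝ) ^ (-p) * b ^ p ≤ (b - a) ^ p := by
        have h1 : (b / 2) ^ p ≤ (b - a) ^ p :=
          Real.rpow_le_rpow (by linarith) (by linarith) hp0.le
        have h2 : (b / 2) ^ p = b ^ p / 2 ^ p := Real.div_rpow hb (by norm_num : (0:ℝ) ≤ 2) p
        have h3 : (2:ℝ) ^ (-p) = ((2:ℝ) ^ p)⁻¹ := Real.rpow_neg (by norm_num) p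
        rw [h3]
        rw [h2, div_eq_inv_mul] at h1
        linarith [h1]
      have hf5 : a ^ (p - 2) * a = a ^ (p - 1) := by
        rw [← Real.rpow_add_one ha0.ne' (p - 2), show p - 2 + 1 = p - 1 by ring]
      have hf4 : a ^ p ≤ p * (a ^ (p - 1) * b) := by
        have h1 : a ^ p = a ^ (p - 1) * a := by
          rw [← Real.rpow_add_one ha0.ne' (p - 1), show p - 1 + 1 = p by ring]
        have h2 : 0 ≤ a ^ (p - 1) := Real.rpow_nonneg ha _
        have h3 : a ≤ p * b := by nlinarith
        rw [h1]
        calc a ^ (p - 1) * a ≤ a ^ (p - 1) * (p * b) := mul_le_mul_of_nonneg_left h3 h2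
          _ = p * (a ^ (p - 1) * b) := by ring
      -- combine
      have hstep : (b - a) ^ p + p * a ^ (p - 2) * (t + a * b)
          ≤ (a ^ 2 + 2 * t + b ^ 2) ^ (p / 2) := by
        nlinarith [mul_le_mul_of_nonneg_left (mul_le_mul_of_nonneg_right hf2 hf1) hp0.le]
      have hexpand : p * a ^ (p - 2) * (t + a * b)
          = p * a ^ (p - 2) * t + p * (a ^ (p - 1) * b) := by
        rw [← hf5]; ring
      rw [hexpand] at hstep
      linarith

theorem stmt_2 (p : ℝ) (hp : 2 ≤ p) :
    ∃ C : ℝ, 0 < C ∧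
      ∀ {H : Type} [NormedAddCommGroup H] [InnerProductSpace ℝ H] (X Y : H),
        ‖X + Y‖ ^ p - ‖X‖ ^ p ≥ C * ‖Y‖ ^ p + p * ‖X‖ ^ (p - 2) * ⟪X, Y⟫ := by
  refine ⟨(2:ℝ) ^ (-p), Real.rpow_pos_of_pos (by norm_num) _, ?_⟩
  intro H _ _ X Y
  have key := scalar_key hp (norm_nonneg X) (norm_nonneg Y) (abs_real_inner_le_norm X Y)
  have hsq : ‖X‖ ^ 2 + 2 * ⟪X, Y⟫ + ‖Y‖ ^ 2 = ‖X + Y‖ ^ 2 := (norm_add_sq_real X Y).symm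
  have h2 : (‖X‖ ^ 2 + 2 * ⟪X, Y⟫ + ‖Y‖ ^ 2) ^ (p / 2) = ‖X + Y‖ ^ p := by
    rw [hsq, sq_rpow (norm_nonneg _), show 2 * (p / 2) = p by ring]
  rw [h2] at key
  linarith
end

section
/- Let 1 < p < N and let u : ℝᴺ → ℝ be a continuously differentiable function with compact support. Then ∫_{ℝᴺ} ‖∇u(x)‖^p dx ≥ ((N-p)/p)^p ∫_{ℝᴺ} |u(x)|^p / ‖x‖^p dx. -/
open MeasureTheory Real Filter Topology

lemma hardy_psi_deriv {p : ℝ} (hp : 1 < p) (t : ℝ) :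
    HasDerivAt (fun s : ℝ => |s| ^ p) (p * |t| ^ (p - 1) * Real.sign t) t := by
  rcases lt_trichotomy t 0 with ht | rfl | ht
  · have h1 : HasDerivAt (fun s : ℝ => (-s) ^ p) ((-1) * p * (-t) ^ (p - 1)) t :=
      (hasDerivAt_neg t).rpow_const (Or.inl (neg_ne_zero.2 (ne_of_lt ht)))
    have h2 : ∀ᶠ s in 𝓝 t, |s| ^ p = (-s) ^ p := by
      filter_upwards [eventually_lt_nhds ht] with s hs
      rw [abs_of_neg hs]
    refine (h1.congr_of_eventuallyEq h2).congr_deriv ?_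
    rw [Real.sign_of_neg ht, abs_of_neg ht]; ring
  · have h0 : p * |(0:ℝ)| ^ (p - 1) * Real.sign 0 = 0 := by
      simp [Real.sign_zero]
    rw [h0, hasDerivAt_iff_tendsto_slope]
    have hb : ∀ᶠ s in 𝓝[≠] (0:ℝ), ‖slope (fun s : ℝ => |s| ^ p) 0 s‖ ≤ |s| ^ (p - 1) := by
      filter_upwards [self_mem_nhdsWithin] with s hs
      have hs' : (s:ℝ) ≠ 0 := hs
      have habs : |s| ≠ 0 := abs_ne_zero.2 hs'
      rw [slope_def_field]
      have hsp := Real.rpow_add_one habs (p - 1)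
      rw [show p - 1 + 1 = p by ring] at hsp
      rw [abs_zero,
        Real.zero_rpow (by linarith : p ≠ 0), sub_zero, sub_zero, Real.norm_eq_abs, abs_div,
        abs_of_nonneg (Real.rpow_nonneg (abs_nonneg s) p), hsp, mul_div_assoc, div_self habs, mul_one]
    have hg : Tendsto (fun s : ℝ => |s| ^ (p - 1)) (𝓝[≠] (0:ℝ)) (𝓝 0) := by
      have h := ((continuous_abs.rpow_const
        (fun x => Or.inr (by linarith : (0:ℝ) ≤ p - 1))).tendsto 0).mono_left
        (nhdsWithin_le_nhds (s := {(0:ℝ)}ᶜ))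
      simpa [Real.zero_rpow (by linarith : p - 1 ≠ 0)] using h
    exact squeeze_zero_norm' hb hg
  · have h1 : HasDerivAt (fun s : ℝ => s ^ p) (1 * p * t ^ (p - 1)) t :=
      (hasDerivAt_id t).rpow_const (Or.inl (ne_of_gt ht))
    have h2 : ∀ᶠ s in 𝓝 t, |s| ^ p = s ^ p := by
      filter_upwards [eventually_gt_nhds ht] with s hs
      rw [abs_of_pos hs]
    refine (h1.congr_of_eventuallyEq h2).congr_deriv ?_
    rw [Real.sign_of_pos ht, abs_of_pos ht]; ring

lemma hardy_psi'_cont {p : ℝ} (hp : 1 < p) :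
    Continuous (fun t : ℝ => p * |t| ^ (p - 1) * Real.sign t) := by
  rw [continuous_iff_continuousAt]
  intro t
  rcases eq_or_ne t 0 with rfl | ht
  · have h0 : p * |(0:ℝ)| ^ (p - 1) * Real.sign 0 = 0 := by simp [Real.sign_zero]
    rw [ContinuousAt, h0]
    have hb : ∀ s : ℝ, ‖p * |s| ^ (p - 1) * Real.sign s‖ ≤ |p| * |s| ^ (p - 1) := by
      intro s
      rw [norm_mul, norm_mul, Real.norm_eq_abs, Real.norm_eq_abs, Real.norm_eq_abs,
        abs_of_nonneg (Real.rpow_nonneg (abs_nonneg s) _)]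
      have : |Real.sign s| ≤ 1 := by
        rcases lt_trichotomy s 0 with h|rfl|h <;>
          simp [Real.sign_of_neg, Real.sign_of_pos, Real.sign_zero, *]
      calc |p| * |s| ^ (p-1) * |Real.sign s| ≤ |p| * |s| ^ (p-1) * 1 := by
            apply mul_le_mul_of_nonneg_left this (by positivity)
        _ = |p| * |s| ^ (p-1) := mul_one _
    have hg : Tendsto (fun s : ℝ => |p| * |s| ^ (p - 1)) (𝓝 0) (𝓝 0) := by
      have h : Tendsto (fun s : ℝ => |p| * |s| ^ (p - 1)) (𝓝 0)
          (𝓝 (|p| * |(0:ℝ)| ^ (p - 1))) :=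
        (continuous_const.mul (continuous_abs.rpow_const
          (fun x => Or.inr (by linarith : (0:ℝ) ≤ p - 1)))).tendsto 0
      simpa [Real.zero_rpow (by linarith : p - 1 ≠ 0)] using h
    exact squeeze_zero_norm hb hg
  · rcases ht.lt_or_gt with hlt | hgt
    · have hev : ∀ᶠ s in 𝓝 t, p * |s| ^ (p - 1) * Real.sign s
          = p * |s| ^ (p - 1) * (-1) := by
        filter_upwards [eventually_lt_nhds hlt] with s hs
        rw [Real.sign_of_neg hs]
      refine ContinuousAt.congr ?_ (hev.mono fun s h => h.symm)
      exact ((continuous_const.mul (continuous_abs.rpow_const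
        (fun x => Or.inr (by linarith)))).mul continuous_const).continuousAt
    · have hev : ∀ᶠ s in 𝓝 t, p * |s| ^ (p - 1) * Real.sign s
          = p * |s| ^ (p - 1) * 1 := by
        filter_upwards [eventually_gt_nhds hgt] with s hs
        rw [Real.sign_of_pos hs]
      refine ContinuousAt.congr ?_ (hev.mono fun s h => h.symm)
      exact ((continuous_const.mul (continuous_abs.rpow_const
        (fun x => Or.inr (by linarith)))).mul continuous_const).continuousAt


variable {N : ℕ} {p ε : ℝ}

noncomputable def hW (N : ℕ) (p ε : ℝ) (x : EuclideanSpace ℝ (Fin N)) : ℝ :=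
  (‖x‖ ^ 2 + ε ^ 2) ^ (-(p / 2))

noncomputable def hDW (N : ℕ) (p ε : ℝ) (x : EuclideanSpace ℝ (Fin N)) :
    EuclideanSpace ℝ (Fin N) →L[ℝ] ℝ :=
  (-(p / 2) * (‖x‖ ^ 2 + ε ^ 2) ^ (-(p / 2) - 1)) • (2 • innerSL ℝ x)

lemma ht_pos (hε : 0 < ε) (x : EuclideanSpace ℝ (Fin N)) : (0:ℝ) < ‖x‖ ^ 2 + ε ^ 2 := by
  positivity

lemma hW_cont (hε : 0 < ε) : Continuous (hW N p ε) :=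
  ((continuous_norm.pow 2).add continuous_const).rpow_const
    (fun x => Or.inl (ht_pos hε x).ne')

lemma hW_pos (hε : 0 < ε) (x : EuclideanSpace ℝ (Fin N)) : 0 < hW N p ε x :=
  Real.rpow_pos_of_pos (ht_pos hε x) _

lemma hW_deriv (hε : 0 < ε) (x : EuclideanSpace ℝ (Fin N)) :
    HasFDerivAt (hW N p ε) (hDW N p ε x) x := by
  have h1 : HasFDerivAt (fun y : EuclideanSpace ℝ (Fin N) => ‖y‖ ^ 2 + ε ^ 2)
      (2 • innerSL ℝ x) x :=
    (hasStrictFDerivAt_norm_sq x).hasFDerivAt.add_const _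
  exact (Real.hasDerivAt_rpow_const (p := -(p / 2))
    (Or.inl (ht_pos hε x).ne')).comp_hasFDerivAt x h1

lemma hDW_cont (hε : 0 < ε) : Continuous (fun x => hDW N p ε x) := by
  unfold hDW
  apply Continuous.fun_smul
  · exact continuous_const.mul (((continuous_norm.pow 2).add continuous_const).rpow_const
      (fun x => Or.inl (ht_pos hε x).ne'))
  · exact (innerSL ℝ).continuous.const_smul 2

noncomputable def hG (N : ℕ) (p ε : ℝ) (i : Fin N) (x : EuclideanSpace ℝ (Fin N)) : ℝ :=
  x i * hW N p ε x

noncomputable def hDG (N : ℕ) (p ε : ℝ) (i : Fin N) (x : EuclideanSpace ℝ (Fin N)) :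
    EuclideanSpace ℝ (Fin N) →L[ℝ] ℝ :=
  x i • hDW N p ε x + hW N p ε x • (EuclideanSpace.proj i : EuclideanSpace ℝ (Fin N) →L[ℝ] ℝ)

lemma hG_deriv (hε : 0 < ε) (i : Fin N) (x : EuclideanSpace ℝ (Fin N)) :
    HasFDerivAt (hG N p ε i) (hDG N p ε i x) x :=
  ((EuclideanSpace.proj i : EuclideanSpace ℝ (Fin N) →L[ℝ] ℝ).hasFDerivAt).mul
    (hW_deriv hε x)

lemma hG_cont (hε : 0 < ε) (i : Fin N) : Continuous (hG N p ε i) :=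
  ((EuclideanSpace.proj i : EuclideanSpace ℝ (Fin N) →L[ℝ] ℝ).continuous).mul (hW_cont hε)

lemma hsum_div (hε : 0 < ε) (x : EuclideanSpace ℝ (Fin N)) :
    ∑ i, hDG N p ε i x (EuclideanSpace.single i 1) =
      N * hW N p ε x + (-p * (‖x‖ ^ 2 + ε ^ 2) ^ (-(p / 2) - 1)) * ‖x‖ ^ 2 := by
  have h1 : ∀ i : Fin N, hDG N p ε i x (EuclideanSpace.single i 1)
      = x i * (2 * (-(p / 2) * (‖x‖ ^ 2 + ε ^ 2) ^ (-(p / 2) - 1)) * x i) + hW N p ε x := by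
    intro i
    simp only [hDG, hDW, ContinuousLinearMap.add_apply, ContinuousLinearMap.smul_apply,
      ContinuousLinearMap.coe_smul', Pi.smul_apply, innerSL_apply_apply, smul_eq_mul]
    rw [EuclideanSpace.inner_single_right]
    have hproj : (EuclideanSpace.proj i : EuclideanSpace ℝ (Fin N) →L[ℝ] ℝ)
        (EuclideanSpace.single i 1) = 1 := by
      simp [EuclideanSpace.single_apply]
    rw [hproj]
    simp only [map_one, RCLike.conj_to_real, starRingEnd_apply, star_trivial]
    ring
  rw [Finset.sum_congr rfl (fun i _ => h1 i), Finset.sum_add_distrib]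
  have h2 : ∑ i : Fin N, x i * (2 * (-(p / 2) * (‖x‖ ^ 2 + ε ^ 2) ^ (-(p / 2) - 1)) * x i)
      = (-p * (‖x‖ ^ 2 + ε ^ 2) ^ (-(p / 2) - 1)) * ∑ i : Fin N, x i * x i := by
    rw [Finset.mul_sum]; congr 1; ext i; ring
  have h3 : ∑ i : Fin N, x i * x i = ‖x‖ ^ 2 := by
    rw [EuclideanSpace.norm_sq_eq]
    exact Finset.sum_congr rfl (fun i _ => by rw [Real.norm_eq_abs, sq_abs, sq])
  rw [h2, h3]
  simp [Finset.card_univ]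
  ring

lemma hdiv_lb (hε : 0 < ε) (hp0 : 0 < p) (x : EuclideanSpace ℝ (Fin N)) :
    ((N : ℝ) - p) * hW N p ε x ≤ ∑ i, hDG N p ε i x (EuclideanSpace.single i 1) := by
  rw [hsum_div hε x]
  have ht := ht_pos hε x
  have h1 : -p * (‖x‖ ^ 2 + ε ^ 2) ^ (-(p / 2) - 1) * (‖x‖ ^ 2 + ε ^ 2)
      ≤ -p * (‖x‖ ^ 2 + ε ^ 2) ^ (-(p / 2) - 1) * ‖x‖ ^ 2 := by
    apply mul_le_mul_of_nonpos_left (by nlinarith [sq_nonneg ε] : ‖x‖ ^ 2 ≤ ‖x‖ ^ 2 + ε ^ 2)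
    have : (0:ℝ) ≤ (‖x‖ ^ 2 + ε ^ 2) ^ (-(p / 2) - 1) := Real.rpow_nonneg ht.le _
    nlinarith
  have h2 : (‖x‖ ^ 2 + ε ^ 2) ^ (-(p / 2) - 1) * (‖x‖ ^ 2 + ε ^ 2) = hW N p ε x := by
    rw [hW, ← Real.rpow_add_one ht.ne' (-(p / 2) - 1)]
    norm_num
  nlinarith [h1, h2]

lemma hx_decomp (x : EuclideanSpace ℝ (Fin N)) (L : EuclideanSpace ℝ (Fin N) →L[ℝ] ℝ) :
    L x = ∑ i, x i * L (EuclideanSpace.single i 1) := by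
  have hb : ∑ i, x i • (EuclideanSpace.single i (1:ℝ)) = x := by
    have := (EuclideanSpace.basisFun (Fin N) ℝ).sum_repr x
    simpa [EuclideanSpace.basisFun_apply, EuclideanSpace.basisFun_repr] using this
  conv_lhs => rw [← hb]
  rw [map_sum]
  simp [smul_eq_mul]


lemma HCS_mul {α : Type*} [TopologicalSpace α] {f g : α → ℝ} (hf : HasCompactSupport f) :
    HasCompactSupport (fun x => f x * g x) := hf.mul_right

section main
variable {u : EuclideanSpace ℝ (Fin N) → ℝ}

lemma hphi_cont (hp : 1 < p) (hu : Continuous u) :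
    Continuous (fun x => |u x| ^ p) :=
  (hu.abs).rpow_const (fun x => Or.inr (by linarith))

lemma hphi_supp (hp : 1 < p) (hsupp : HasCompactSupport u) :
    HasCompactSupport (fun x => |u x| ^ p) := by
  have h : (fun x => |u x| ^ p) = (fun t : ℝ => |t| ^ p) ∘ u := rfl
  rw [h]
  exact hsupp.comp_left (by simp [Real.zero_rpow (by linarith : p ≠ 0)])

lemma hpsi_supp (hp : 1 < p) (hsupp : HasCompactSupport u) :
    HasCompactSupport (fun x => p * |u x| ^ (p - 1) * Real.sign (u x)) := by
  have h : (fun x => p * |u x| ^ (p - 1) * Real.sign (u x))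
      = (fun t : ℝ => p * |t| ^ (p - 1) * Real.sign t) ∘ u := rfl
  rw [h]
  exact hsupp.comp_left (by simp [Real.sign_zero])

lemma hardy_ibp (hp : 1 < p) (hε : 0 < ε)
    (hu : ContDiff ℝ 1 u) (hsupp : HasCompactSupport u) :
    ∫ x, |u x| ^ p * (∑ i, hDG N p ε i x (EuclideanSpace.single i 1)) ∂volume =
      - ∫ x, (p * |u x| ^ (p - 1) * Real.sign (u x)) * fderiv ℝ u x x * hW N p ε x
        ∂volume := by
  have hp0 : (0:ℝ) < p := lt_trans one_pos hp
  have hudiff : Differentiable ℝ u := hu.differentiable one_ne_zero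
  have huc : Continuous u := hu.continuous
  have hψc : Continuous (fun x => p * |u x| ^ (p - 1) * Real.sign (u x)) :=
    (hardy_psi'_cont hp).comp huc
  have hDuc : Continuous (fderiv ℝ u) := hu.continuous_fderiv one_ne_zero
  have hφc : Continuous (fun x => |u x| ^ p) := hphi_cont hp huc
  have hφs : HasCompactSupport (fun x => |u x| ^ p) := hphi_supp hp hsupp
  have hψs : HasCompactSupport (fun x => p * |u x| ^ (p - 1) * Real.sign (u x)) :=
    hpsi_supp hp hsupp
  have hφd : ∀ x, HasFDerivAt (fun y => |u y| ^ p)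
      ((p * |u x| ^ (p - 1) * Real.sign (u x)) • fderiv ℝ u x) x := fun x =>
    (hardy_psi_deriv hp (u x)).comp_hasFDerivAt x (hudiff x).hasFDerivAt
  have key : ∀ i : Fin N,
      ∫ x, |u x| ^ p * hDG N p ε i x (EuclideanSpace.single i 1) ∂volume =
      - ∫ x, ((p * |u x| ^ (p - 1) * Real.sign (u x)) • fderiv ℝ u x)
          (EuclideanSpace.single i 1) * hG N p ε i x ∂volume := by
    intro i
    have hc1 : Continuous (fun x => ((p * |u x| ^ (p - 1) * Real.sign (u x)) • fderiv ℝ u x)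
        (EuclideanSpace.single i 1)) := (hψc.smul hDuc).clm_apply continuous_const
    have hs1 : HasCompactSupport (fun x => ((p * |u x| ^ (p - 1) * Real.sign (u x)) •
        fderiv ℝ u x) (EuclideanSpace.single i 1) * hG N p ε i x) := by
      apply HasCompactSupport.mono (hψs.mul_right (f' := fun x =>
        fderiv ℝ u x (EuclideanSpace.single i 1) * hG N p ε i x))
      intro x hx
      simp only [Function.mem_support, ContinuousLinearMap.smul_apply, smul_eq_mul,
        Pi.mul_apply] at hx ⊢
      rw [mul_assoc] at hx
      exact hx
    have h1 : Integrable (fun x => ((p * |u x| ^ (p - 1) * Real.sign (u x)) • fderiv ℝ u x)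
        (EuclideanSpace.single i 1) * hG N p ε i x) volume :=
      (hc1.mul (hG_cont hε i)).integrable_of_hasCompactSupport hs1
    have h2 : Integrable (fun x => |u x| ^ p * hDG N p ε i x (EuclideanSpace.single i 1))
        volume := by
      refine Continuous.integrable_of_hasCompactSupport
        (hφc.mul ?_) (HCS_mul hφs)
      exact Continuous.clm_apply (by
        unfold hDG
        exact (((EuclideanSpace.proj i : EuclideanSpace ℝ (Fin N) →L[ℝ] ℝ).continuous).smul (hDW_cont hε)).add
          ((hW_cont hε).smul continuous_const)) continuous_const
    have h3 : Integrable (fun x => |u x| ^ p * hG N p ε i x) volume :=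
      (hφc.mul (hG_cont hε i)).integrable_of_hasCompactSupport (HCS_mul hφs)
    exact integral_bilinear_hasFDerivAt_right_eq_neg_left_of_integrable
      (B := ContinuousLinearMap.mul ℝ ℝ) h1 h2 h3 (fun x _ => hφd x) (fun x _ => hG_deriv hε i x)
  have hint2 : ∀ i : Fin N, Integrable
      (fun x => |u x| ^ p * hDG N p ε i x (EuclideanSpace.single i 1)) volume := by
    intro i
    refine Continuous.integrable_of_hasCompactSupport (hφc.mul ?_) (HCS_mul hφs)
    exact Continuous.clm_apply (by
      unfold hDG
      exact (((EuclideanSpace.proj i : EuclideanSpace ℝ (Fin N) →L[ℝ] ℝ).continuous).smul (hDW_cont hε)).add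
        ((hW_cont hε).smul continuous_const)) continuous_const
  have hint1 : ∀ i : Fin N, Integrable
      (fun x => ((p * |u x| ^ (p - 1) * Real.sign (u x)) • fderiv ℝ u x)
        (EuclideanSpace.single i 1) * hG N p ε i x) volume := by
    intro i
    have hc1 : Continuous (fun x => ((p * |u x| ^ (p - 1) * Real.sign (u x)) • fderiv ℝ u x)
        (EuclideanSpace.single i 1)) := (hψc.smul hDuc).clm_apply continuous_const
    have hs1 : HasCompactSupport (fun x => ((p * |u x| ^ (p - 1) * Real.sign (u x)) •
        fderiv ℝ u x) (EuclideanSpace.single i 1) * hG N p ε i x) := by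
      apply HasCompactSupport.mono (hψs.mul_right (f' := fun x =>
        fderiv ℝ u x (EuclideanSpace.single i 1) * hG N p ε i x))
      intro x hx
      simp only [Function.mem_support, ContinuousLinearMap.smul_apply, smul_eq_mul,
        Pi.mul_apply] at hx ⊢
      rw [mul_assoc] at hx
      exact hx
    exact (hc1.mul (hG_cont hε i)).integrable_of_hasCompactSupport hs1
  calc ∫ x, |u x| ^ p * (∑ i, hDG N p ε i x (EuclideanSpace.single i 1)) ∂volume
      = ∫ x, ∑ i, |u x| ^ p * hDG N p ε i x (EuclideanSpace.single i 1) ∂volume := by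
        congr 1; funext x; rw [Finset.mul_sum]
    _ = ∑ i, ∫ x, |u x| ^ p * hDG N p ε i x (EuclideanSpace.single i 1) ∂volume :=
        integral_finset_sum _ (fun i _ => hint2 i)
    _ = ∑ i, - ∫ x, ((p * |u x| ^ (p - 1) * Real.sign (u x)) • fderiv ℝ u x)
          (EuclideanSpace.single i 1) * hG N p ε i x ∂volume :=
        Finset.sum_congr rfl (fun i _ => key i)
    _ = - ∑ i, ∫ x, ((p * |u x| ^ (p - 1) * Real.sign (u x)) • fderiv ℝ u x)
          (EuclideanSpace.single i 1) * hG N p ε i x ∂volume := by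
        rw [Finset.sum_neg_distrib]
    _ = - ∫ x, ∑ i, ((p * |u x| ^ (p - 1) * Real.sign (u x)) • fderiv ℝ u x)
          (EuclideanSpace.single i 1) * hG N p ε i x ∂volume := by
        rw [integral_finset_sum _ (fun i _ => hint1 i)]
    _ = - ∫ x, (p * |u x| ^ (p - 1) * Real.sign (u x)) * fderiv ℝ u x x * hW N p ε x
          ∂volume := by
        congr 1
        congr 1
        funext x
        have hdec := hx_decomp x (fderiv ℝ u x)
        simp only [ContinuousLinearMap.smul_apply, smul_eq_mul, hG]
        rw [hdec, Finset.mul_sum, Finset.sum_mul]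
        exact Finset.sum_congr rfl (fun i _ => by ring)

end main

lemma hardy_alg {p a I L : ℝ} (hp : 1 < p) (ha : 0 < a) (hI : 0 ≤ I) (hL : 0 ≤ L)
    (h : a * I ≤ p * (I ^ (1 - 1 / p) * L ^ (1 / p))) : I ≤ (p / a) ^ p * L := by
  have hp0 : (0:ℝ) < p := lt_trans one_pos hp
  rcases eq_or_lt_of_le hI with hI0 | hIpos
  · rw [← hI0]
    positivity
  · have hsplit : I = I ^ (1 - 1 / p) * I ^ (1 / p) := by
      rw [← Real.rpow_add hIpos]
      norm_num
    have hkey : a * I ^ (1 / p) ≤ p * L ^ (1 / p) := by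
      have hpowpos : (0:ℝ) < I ^ (1 - 1 / p) := Real.rpow_pos_of_pos hIpos _
      have h' : I ^ (1 - 1 / p) * (a * I ^ (1 / p)) ≤ I ^ (1 - 1 / p) * (p * L ^ (1 / p)) := by
        calc I ^ (1 - 1 / p) * (a * I ^ (1 / p)) = a * (I ^ (1 - 1 / p) * I ^ (1 / p)) := by ring
          _ = a * I := by rw [← hsplit]
          _ ≤ p * (I ^ (1 - 1 / p) * L ^ (1 / p)) := h
          _ = I ^ (1 - 1 / p) * (p * L ^ (1 / p)) := by ring
      exact le_of_mul_le_mul_left h' hpowpos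
    have hrp : (a * I ^ (1 / p)) ^ p ≤ (p * L ^ (1 / p)) ^ p :=
      Real.rpow_le_rpow (by positivity) hkey hp0.le
    rw [Real.mul_rpow ha.le (Real.rpow_nonneg hI _),
      Real.mul_rpow hp0.le (Real.rpow_nonneg hL _)] at hrp
    rw [← Real.rpow_mul hI, ← Real.rpow_mul hL, one_div_mul_cancel hp0.ne',
      Real.rpow_one, Real.rpow_one] at hrp
    rw [Real.div_rpow hp0.le ha.le, div_mul_eq_mul_div,
      le_div_iff₀ (Real.rpow_pos_of_pos ha p)]
    nlinarith [hrp]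

lemma hardy_eps {u : EuclideanSpace ℝ (Fin N) → ℝ} (hp : 1 < p) (hpN : p < N) (hε : 0 < ε)
    (hu : ContDiff ℝ 1 u) (hsupp : HasCompactSupport u) :
    ∫ x, |u x| ^ p * hW N p ε x ∂volume ≤
      (p / ((N : ℝ) - p)) ^ p * ∫ x, ‖fderiv ℝ u x‖ ^ p ∂volume := by
  have hp0 : (0:ℝ) < p := lt_trans one_pos hp
  have hp1 : (0:ℝ) < p - 1 := by linarith
  have ha : (0:ℝ) < (N : ℝ) - p := sub_pos.2 hpN
  have huc : Continuous u := hu.continuous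
  have hDuc : Continuous (fderiv ℝ u) := hu.continuous_fderiv one_ne_zero
  have hφc : Continuous (fun x => |u x| ^ p) := hphi_cont hp huc
  have hφs : HasCompactSupport (fun x => |u x| ^ p) := hphi_supp hp hsupp
  have hφnn : ∀ x, 0 ≤ |u x| ^ p := fun x => Real.rpow_nonneg (abs_nonneg _) _
  -- the weight t ^ (-(p-1)/2)
  have hVc : Continuous (fun x : EuclideanSpace ℝ (Fin N) =>
      (‖x‖ ^ 2 + ε ^ 2) ^ (-((p - 1) / 2))) :=
    ((continuous_norm.pow 2).add continuous_const).rpow_const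
      (fun x => Or.inl (ht_pos hε x).ne')
  -- F := |u|^{p-1} * t^{-(p-1)/2}
  have hFc : Continuous (fun x => |u x| ^ (p - 1) *
      (‖x‖ ^ 2 + ε ^ 2) ^ (-((p - 1) / 2))) :=
    ((huc.abs).rpow_const (fun x => Or.inr hp1.le)).mul hVc
  have hFs : HasCompactSupport (fun x => |u x| ^ (p - 1) *
      (‖x‖ ^ 2 + ε ^ 2) ^ (-((p - 1) / 2))) := by
    apply HasCompactSupport.mul_right
    have h : (fun x => |u x| ^ (p - 1)) = (fun t : ℝ => |t| ^ (p - 1)) ∘ u := rfl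
    rw [h]
    exact hsupp.comp_left (by simp [Real.zero_rpow hp1.ne'])
  have hFnn : ∀ x, 0 ≤ |u x| ^ (p - 1) * (‖x‖ ^ 2 + ε ^ 2) ^ (-((p - 1) / 2)) :=
    fun x => mul_nonneg (Real.rpow_nonneg (abs_nonneg _) _)
      (Real.rpow_nonneg (ht_pos hε x).le _)
  have hIint : Integrable (fun x => |u x| ^ p * hW N p ε x) volume :=
    (hφc.mul (hW_cont hε)).integrable_of_hasCompactSupport (HCS_mul hφs)
  have hLint : Integrable (fun x => ‖fderiv ℝ u x‖ ^ p) volume := by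
    refine Continuous.integrable_of_hasCompactSupport
      ((hDuc.norm).rpow_const (fun x => Or.inr hp0.le)) ?_
    have h : (fun x => ‖fderiv ℝ u x‖ ^ p) = (fun t : ℝ => t ^ p) ∘ (fun x => ‖fderiv ℝ u x‖) :=
      rfl
    rw [h]
    exact (hsupp.fderiv ℝ).norm.comp_left (g := fun t : ℝ => t ^ p)
      (by simp [Real.zero_rpow hp0.ne'])
  have hI0 : 0 ≤ ∫ x, |u x| ^ p * hW N p ε x ∂volume :=
    integral_nonneg (fun x => mul_nonneg (hφnn x) (hW_pos hε x).le)
  have hL0 : 0 ≤ ∫ x, ‖fderiv ℝ u x‖ ^ p ∂volume :=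
    integral_nonneg (fun x => Real.rpow_nonneg (norm_nonneg _) _)
  -- Step 1: divergence lower bound
  have hdivc : Continuous (fun x => ∑ i, hDG N p ε i x (EuclideanSpace.single i 1)) := by
    apply continuous_finset_sum
    intro i _
    refine Continuous.clm_apply ?_ continuous_const
    unfold hDG
    exact (((EuclideanSpace.proj i : EuclideanSpace ℝ (Fin N) →L[ℝ] ℝ).continuous).smul (hDW_cont hε)).add ((hW_cont hε).smul continuous_const)
  have hdivint : Integrable (fun x => |u x| ^ p *
      ∑ i, hDG N p ε i x (EuclideanSpace.single i 1)) volume :=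
    (hφc.mul hdivc).integrable_of_hasCompactSupport (HCS_mul hφs)
  have step1 : ((N : ℝ) - p) * ∫ x, |u x| ^ p * hW N p ε x ∂volume ≤
      ∫ x, |u x| ^ p * ∑ i, hDG N p ε i x (EuclideanSpace.single i 1) ∂volume := by
    rw [← integral_const_mul]
    apply integral_mono (hIint.const_mul _) hdivint
    intro x
    calc ((N : ℝ) - p) * (|u x| ^ p * hW N p ε x)
        = |u x| ^ p * (((N : ℝ) - p) * hW N p ε x) := by ring
      _ ≤ |u x| ^ p * ∑ i, hDG N p ε i x (EuclideanSpace.single i 1) :=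
        mul_le_mul_of_nonneg_left (hdiv_lb hε hp0 x) (hφnn x)
  -- Step 2: the IBP identity and pointwise bound
  have hmidint : Integrable (fun x => (p * |u x| ^ (p - 1) * Real.sign (u x)) *
      fderiv ℝ u x x * hW N p ε x) volume := by
    refine Continuous.integrable_of_hasCompactSupport ?_ ?_
    · exact ((((hardy_psi'_cont hp).comp huc).mul
        (hDuc.clm_apply continuous_id)).mul (hW_cont hε))
    · apply HasCompactSupport.mono ((hpsi_supp hp hsupp).mul_right
        (f' := fun x => fderiv ℝ u x x * hW N p ε x))
      intro x hx
      simp only [Function.mem_support, Pi.mul_apply] at hx ⊢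
      rw [mul_assoc] at hx
      exact hx
  have hRint : Integrable (fun x => p * ((|u x| ^ (p - 1) *
      (‖x‖ ^ 2 + ε ^ 2) ^ (-((p - 1) / 2))) * ‖fderiv ℝ u x‖)) volume := by
    refine Continuous.integrable_of_hasCompactSupport
      (continuous_const.mul (hFc.mul hDuc.norm)) ?_
    apply HasCompactSupport.mono (hFs.mul_right (f' := fun x => ‖fderiv ℝ u x‖))
    intro x hx
    simp only [Function.mem_support, Pi.mul_apply] at hx ⊢
    exact fun hc => hx (by rw [hc, mul_zero])
  -- pointwise weight bound
  have hxw : ∀ x : EuclideanSpace ℝ (Fin N),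
      ‖x‖ * hW N p ε x ≤ (‖x‖ ^ 2 + ε ^ 2) ^ (-((p - 1) / 2)) := by
    intro x
    have ht := ht_pos hε x
    have hle : ‖x‖ ≤ (‖x‖ ^ 2 + ε ^ 2) ^ ((1:ℝ) / 2) := by
      rw [← Real.sqrt_eq_rpow]
      have h1 : Real.sqrt (‖x‖ ^ 2) ≤ Real.sqrt (‖x‖ ^ 2 + ε ^ 2) :=
        Real.sqrt_le_sqrt (by nlinarith [sq_nonneg ε])
      rwa [Real.sqrt_sq (norm_nonneg x)] at h1
    calc ‖x‖ * hW N p ε x ≤ (‖x‖ ^ 2 + ε ^ 2) ^ ((1:ℝ) / 2) * hW N p ε x :=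
          mul_le_mul_of_nonneg_right hle (hW_pos hε x).le
      _ = (‖x‖ ^ 2 + ε ^ 2) ^ (-((p - 1) / 2)) := by
          rw [hW, ← Real.rpow_add ht]
          norm_num
          ring_nf
  have step3 : - ∫ x, (p * |u x| ^ (p - 1) * Real.sign (u x)) *
        fderiv ℝ u x x * hW N p ε x ∂volume ≤
      ∫ x, p * ((|u x| ^ (p - 1) * (‖x‖ ^ 2 + ε ^ 2) ^ (-((p - 1) / 2))) *
        ‖fderiv ℝ u x‖) ∂volume := by
    rw [← integral_neg]
    apply integral_mono hmidint.neg hRint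
    intro x
    have habsψ : |p * |u x| ^ (p - 1) * Real.sign (u x)| ≤ p * |u x| ^ (p - 1) := by
      rw [abs_mul, abs_mul, abs_of_pos hp0, abs_of_nonneg (Real.rpow_nonneg (abs_nonneg _) _)]
      have hsgn : |Real.sign (u x)| ≤ 1 := by
        rcases lt_trichotomy (u x) 0 with h | h | h <;>
          simp [Real.sign_of_neg, Real.sign_of_pos, Real.sign_zero, *]
      calc p * |u x| ^ (p - 1) * |Real.sign (u x)| ≤ p * |u x| ^ (p - 1) * 1 :=
            mul_le_mul_of_nonneg_left hsgn (by positivity)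
        _ = p * |u x| ^ (p - 1) := mul_one _
    have hDub : |fderiv ℝ u x x| ≤ ‖fderiv ℝ u x‖ * ‖x‖ := (fderiv ℝ u x).le_opNorm x
    have hwpos := hW_pos (p := p) hε x
    calc -((p * |u x| ^ (p - 1) * Real.sign (u x)) * fderiv ℝ u x x * hW N p ε x)
        ≤ |(p * |u x| ^ (p - 1) * Real.sign (u x)) * fderiv ℝ u x x * hW N p ε x| :=
          neg_le_abs _
      _ = |p * |u x| ^ (p - 1) * Real.sign (u x)| * |fderiv ℝ u x x| * hW N p ε x := by
          rw [abs_mul, abs_mul, abs_of_pos hwpos]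
      _ ≤ (p * |u x| ^ (p - 1)) * (‖fderiv ℝ u x‖ * ‖x‖) * hW N p ε x := by
          apply mul_le_mul_of_nonneg_right _ hwpos.le
          exact mul_le_mul habsψ hDub (abs_nonneg _) (by positivity)
      _ = (p * (|u x| ^ (p - 1) * ‖fderiv ℝ u x‖)) * (‖x‖ * hW N p ε x) := by ring
      _ ≤ (p * (|u x| ^ (p - 1) * ‖fderiv ℝ u x‖)) * ((‖x‖ ^ 2 + ε ^ 2) ^ (-((p - 1) / 2))) := by
          apply mul_le_mul_of_nonneg_left (hxw x) (by positivity)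
      _ = p * ((|u x| ^ (p - 1) * (‖x‖ ^ 2 + ε ^ 2) ^ (-((p - 1) / 2))) * ‖fderiv ℝ u x‖) := by
          ring
  -- Hölder
  have hconj : Real.HolderConjugate (p / (p - 1)) p :=
    (Real.HolderConjugate.conjExponent hp).symm
  have hGs : HasCompactSupport (fun x => ‖fderiv ℝ u x‖) := (hsupp.fderiv ℝ).norm
  have hHolder := integral_mul_le_Lp_mul_Lq_of_nonneg (μ := volume) hconj
    (Eventually.of_forall hFnn) (Eventually.of_forall (fun x => norm_nonneg (fderiv ℝ u x)))
    (hFc.memLp_of_hasCompactSupport hFs) (hDuc.norm.memLp_of_hasCompactSupport hGs)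
  have hFpow : ∀ x : EuclideanSpace ℝ (Fin N),
      (|u x| ^ (p - 1) * (‖x‖ ^ 2 + ε ^ 2) ^ (-((p - 1) / 2))) ^ (p / (p - 1))
        = |u x| ^ p * hW N p ε x := by
    intro x
    rw [Real.mul_rpow (Real.rpow_nonneg (abs_nonneg _) _)
      (Real.rpow_nonneg (ht_pos hε x).le _),
      ← Real.rpow_mul (abs_nonneg _), ← Real.rpow_mul (ht_pos hε x).le, hW]
    congr 1
    · congr 1
      field_simp
    · congr 1
      field_simp
  have hexp : 1 / (p / (p - 1)) = 1 - 1 / p := by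
    field_simp
  simp only [hFpow] at hHolder
  rw [hexp] at hHolder
  -- final assembly
  have hchain : ((N : ℝ) - p) * ∫ x, |u x| ^ p * hW N p ε x ∂volume ≤
      p * ((∫ x, |u x| ^ p * hW N p ε x ∂volume) ^ (1 - 1 / p) *
        (∫ x, ‖fderiv ℝ u x‖ ^ p ∂volume) ^ (1 / p)) := by
    calc ((N : ℝ) - p) * ∫ x, |u x| ^ p * hW N p ε x ∂volume
        ≤ ∫ x, |u x| ^ p * ∑ i, hDG N p ε i x (EuclideanSpace.single i 1) ∂volume := step1
      _ = - ∫ x, (p * |u x| ^ (p - 1) * Real.sign (u x)) * fderiv ℝ u x x * hW N p ε x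
            ∂volume := hardy_ibp hp hε hu hsupp
      _ ≤ ∫ x, p * ((|u x| ^ (p - 1) * (‖x‖ ^ 2 + ε ^ 2) ^ (-((p - 1) / 2))) *
            ‖fderiv ℝ u x‖) ∂volume := step3
      _ = p * ∫ x, (|u x| ^ (p - 1) * (‖x‖ ^ 2 + ε ^ 2) ^ (-((p - 1) / 2))) *
            ‖fderiv ℝ u x‖ ∂volume := integral_const_mul p _
      _ ≤ p * ((∫ x, |u x| ^ p * hW N p ε x ∂volume) ^ (1 - 1 / p) *
            (∫ x, ‖fderiv ℝ u x‖ ^ p ∂volume) ^ (1 / p)) :=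
          mul_le_mul_of_nonneg_left hHolder hp0.le
  exact hardy_alg hp ha hI0 hL0 hchain
theorem stmt_4 (N : ℕ) (p : ℝ) (hp : 1 < p) (hpN : p < N)
    (u : EuclideanSpace ℝ (Fin N) → ℝ)
    (hu : ContDiff ℝ 1 u) (hsupp : HasCompactSupport u) :
    ∫ x, ‖gradient u x‖ ^ p ∂volume ≥
      ((N - p) / p) ^ p * ∫ x, |u x| ^ p / ‖x‖ ^ p ∂volume := by
  have hp0 : (0:ℝ) < p := lt_trans one_pos hp
  have ha : (0:ℝ) < (N : ℝ) - p := sub_pos.2 hpN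
  have hN1 : 1 ≤ N := by
    by_contra h
    push_neg at h
    interval_cases N <;> norm_num at hpN <;> linarith
  haveI : Nonempty (Fin N) := ⟨⟨0, by omega⟩⟩
  have huc : Continuous u := hu.continuous
  have hDuc : Continuous (fderiv ℝ u) := hu.continuous_fderiv one_ne_zero
  -- replace gradient norm with fderiv norm
  have hgrad : (fun x => ‖gradient u x‖ ^ p) = fun x => ‖fderiv ℝ u x‖ ^ p := by
    funext x
    rw [gradient, LinearIsometryEquiv.norm_map]
  rw [ge_iff_le, hgrad]
  set L := ∫ x, ‖fderiv ℝ u x‖ ^ p ∂volume with hL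
  have hL0 : 0 ≤ L := integral_nonneg (fun x => Real.rpow_nonneg (norm_nonneg _) _)
  set C := (p / ((N : ℝ) - p)) ^ p * L with hC
  have hC0 : 0 ≤ C := mul_nonneg (Real.rpow_nonneg (by positivity) _) hL0
  -- Fatou setup
  set g : EuclideanSpace ℝ (Fin N) → ENNReal :=
    fun x => ENNReal.ofReal (|u x| ^ p / ‖x‖ ^ p) with hgdef
  have hεn : ∀ n : ℕ, (0:ℝ) < 1 / ((n:ℝ) + 1) := fun n => by positivity
  have hIint : ∀ n : ℕ, Integrable (fun x => |u x| ^ p * hW N p (1 / ((n:ℝ) + 1)) x) volume :=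
    fun n => ((hphi_cont hp huc).mul (hW_cont (hεn n))).integrable_of_hasCompactSupport
      (HCS_mul (hphi_supp hp hsupp))
  have h_each : ∀ n : ℕ,
      ∫⁻ x, ENNReal.ofReal (|u x| ^ p * hW N p (1 / ((n:ℝ) + 1)) x) ∂volume
        ≤ ENNReal.ofReal C := by
    intro n
    rw [← ofReal_integral_eq_lintegral_ofReal (hIint n)
      (Eventually.of_forall (fun x => mul_nonneg (Real.rpow_nonneg (abs_nonneg _) _)
        (hW_pos (hεn n) x).le))]
    exact ENNReal.ofReal_le_ofReal (hardy_eps hp hpN (hεn n) hu hsupp)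
  have h_tend : ∀ x : EuclideanSpace ℝ (Fin N), x ≠ 0 →
      Tendsto (fun n : ℕ => ENNReal.ofReal (|u x| ^ p * hW N p (1 / ((n:ℝ) + 1)) x)) atTop
        (𝓝 (g x)) := by
    intro x hx
    have hx2 : (0:ℝ) < ‖x‖ ^ 2 := pow_pos (norm_pos_iff.2 hx) 2
    have h1 : Tendsto (fun n : ℕ => ‖x‖ ^ 2 + (1 / ((n:ℝ) + 1)) ^ 2) atTop (𝓝 (‖x‖ ^ 2)) := by
      have h2 : Tendsto (fun n : ℕ => 1 / ((n:ℝ) + 1)) atTop (𝓝 0) :=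
        tendsto_one_div_add_atTop_nhds_zero_nat
      have h2' := (h2.pow 2).const_add (‖x‖ ^ 2)
      simpa using h2'
    have h3 : Tendsto (fun n : ℕ => hW N p (1 / ((n:ℝ) + 1)) x) atTop
        (𝓝 ((‖x‖ ^ 2) ^ (-(p / 2)))) := by
      have := h1.rpow_const (p := -(p / 2)) (Or.inl hx2.ne')
      simpa [hW] using this
    have h4 : (‖x‖ ^ 2 : ℝ) ^ (-(p / 2)) = (‖x‖ ^ p)⁻¹ := by
      rw [← Real.rpow_natCast ‖x‖ 2, ← Real.rpow_mul (norm_nonneg x), ← Real.rpow_neg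
        (norm_nonneg x)]
      norm_num
      congr 1
      ring
    have h5 : Tendsto (fun n : ℕ => |u x| ^ p * hW N p (1 / ((n:ℝ) + 1)) x) atTop
        (𝓝 (|u x| ^ p / ‖x‖ ^ p)) := by
      have h5' := h3.const_mul (|u x| ^ p)
      rw [h4] at h5'
      simpa [div_eq_mul_inv] using h5'
    exact (ENNReal.continuous_ofReal.tendsto _).comp h5
  have hnull : volume ({(0 : EuclideanSpace ℝ (Fin N))} : Set _) = 0 := by
    haveI : Nontrivial (EuclideanSpace ℝ (Fin N)) := by
      infer_instance
    exact measure_singleton 0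
  have h_ae : ∀ᵐ x : EuclideanSpace ℝ (Fin N) ∂volume,
      g x = liminf (fun n : ℕ =>
        ENNReal.ofReal (|u x| ^ p * hW N p (1 / ((n:ℝ) + 1)) x)) atTop := by
    filter_upwards [compl_mem_ae_iff.2 hnull] with x hx
    exact ((h_tend x hx).liminf_eq).symm
  have hmeas : ∀ n : ℕ, Measurable (fun x : EuclideanSpace ℝ (Fin N) =>
      ENNReal.ofReal (|u x| ^ p * hW N p (1 / ((n:ℝ) + 1)) x)) := fun n =>
    ((hphi_cont hp huc).mul (hW_cont (hεn n))).measurable.ennreal_ofReal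
  have h_lint : ∫⁻ x, g x ∂volume ≤ ENNReal.ofReal C := by
    calc ∫⁻ x, g x ∂volume
        = ∫⁻ x, liminf (fun n : ℕ =>
            ENNReal.ofReal (|u x| ^ p * hW N p (1 / ((n:ℝ) + 1)) x)) atTop ∂volume :=
          lintegral_congr_ae h_ae
      _ ≤ liminf (fun n : ℕ => ∫⁻ x,
            ENNReal.ofReal (|u x| ^ p * hW N p (1 / ((n:ℝ) + 1)) x) ∂volume) atTop :=
          lintegral_liminf_le hmeas
      _ ≤ liminf (fun _ : ℕ => ENNReal.ofReal C) atTop :=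
          liminf_le_liminf (Eventually.of_forall h_each)
      _ = ENNReal.ofReal C := liminf_const _
  -- relate to the Bochner integral
  have hKnn : ∀ x : EuclideanSpace ℝ (Fin N), 0 ≤ |u x| ^ p / ‖x‖ ^ p := fun x =>
    div_nonneg (Real.rpow_nonneg (abs_nonneg _) _) (Real.rpow_nonneg (norm_nonneg _) _)
  have hKm : AEStronglyMeasurable (fun x : EuclideanSpace ℝ (Fin N) =>
      |u x| ^ p / ‖x‖ ^ p) volume := by
    apply Measurable.aestronglyMeasurable
    exact ((hphi_cont hp huc).measurable).div
      ((continuous_norm.rpow_const (fun x => Or.inr hp0.le)).measurable)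
  have hKeq : ∫ x, |u x| ^ p / ‖x‖ ^ p ∂volume = (∫⁻ x, g x ∂volume).toReal := by
    rw [integral_eq_lintegral_of_nonneg_ae (Eventually.of_forall hKnn) hKm]
  have hKle : ∫ x, |u x| ^ p / ‖x‖ ^ p ∂volume ≤ C := by
    rw [hKeq]
    calc (∫⁻ x, g x ∂volume).toReal ≤ (ENNReal.ofReal C).toReal :=
          ENNReal.toReal_mono ENNReal.ofReal_ne_top h_lint
      _ = C := ENNReal.toReal_ofReal hC0
  -- conclude
  have hone : (((N : ℝ) - p) / p) ^ p * (p / ((N : ℝ) - p)) ^ p = 1 := by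
    rw [← Real.mul_rpow (by positivity) (by positivity)]
    rw [div_mul_div_comm]
    rw [mul_comm ((N : ℝ) - p) p, div_self (by positivity)]
    exact Real.one_rpow p
  calc (((N : ℝ) - p) / p) ^ p * ∫ x, |u x| ^ p / ‖x‖ ^ p ∂volume
      ≤ (((N : ℝ) - p) / p) ^ p * C :=
        mul_le_mul_of_nonneg_left hKle (Real.rpow_nonneg (by positivity) _)
    _ = L := by rw [hC, ← mul_assoc, hone, one_mul]
end

section
/- Let p = 2 < N and u : ℝᴺ → ℝ be continuously differentiable with compact support. Then ∫_{ℝᴺ} ‖∇u(x)‖² dx ≥ ((N-2)/2)² ∫_{ℝᴺ} u(x)² / ‖x‖² dx. -/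
set_option maxHeartbeats 1000000
open MeasureTheory

local notation "E" N => EuclideanSpace ℝ (Fin N)

lemma hasFDerivAt_g {N : ℕ} (ε : ℝ) (hε : 0 < ε) (i : Fin N) (x : E N) :
    HasFDerivAt (fun y : E N => y i * (‖y‖^2 + ε)⁻¹)
      (x i • ((-(((‖x‖^2 + ε))^2)⁻¹) • (2 • innerSL ℝ x)) +
        (‖x‖^2 + ε)⁻¹ • (EuclideanSpace.proj i : (E N) →L[ℝ] ℝ)) x := by
  have hq : HasFDerivAt (fun y : E N => ‖y‖^2 + ε) (2 • innerSL ℝ x) x := by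
    simpa using ((hasFDerivAt_id x).norm_sq).add_const ε
  have hne : ‖x‖^2 + ε ≠ 0 := by positivity
  have hinv : HasFDerivAt (fun y : E N => (‖y‖^2 + ε)⁻¹)
      ((-((‖x‖^2 + ε)^2)⁻¹) • (2 • innerSL ℝ x)) x := by
    have := (hasDerivAt_inv hne).comp_hasFDerivAt x hq
    exact this
  have hp : HasFDerivAt (fun y : E N => y i)
      (EuclideanSpace.proj i : (E N) →L[ℝ] ℝ) x := by
    have h := (EuclideanSpace.proj (𝕜 := ℝ) (i := i)).hasFDerivAt (x := x)
    exact h.congr_of_eventuallyEq (Filter.Eventually.of_forall fun y => by simp)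
  exact hp.mul hinv

lemma ibp {N : ℕ} (u : (E N) → ℝ) (hu : ContDiff ℝ 1 u)
    (hsupp : HasCompactSupport u) {ε : ℝ} (hε : 0 < ε) :
    ∫ x : E N, (u x * u x) * ((N:ℝ) * (‖x‖^2 + ε)⁻¹ - 2 * ‖x‖^2 * ((‖x‖^2 + ε)^2)⁻¹)
      = - ∫ x : E N, (2 * u x * (fderiv ℝ u x x)) * (‖x‖^2 + ε)⁻¹ := by
  classical
  set q : (E N) → ℝ := fun x => ‖x‖^2 + ε with hq_def
  have hqpos : ∀ x : E N, 0 < q x := fun x => by positivity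
  have hqcont : Continuous q := by fun_prop
  have hqinv_cont : Continuous fun x : E N => (q x)⁻¹ :=
    hqcont.inv₀ fun x => (hqpos x).ne'
  have hud : Differentiable ℝ u := hu.differentiable one_ne_zero
  have hucont : Continuous u := hu.continuous
  have hfd'cont : Continuous (fderiv ℝ u) := (hu.fderiv_right (m := 0) le_rfl).continuous
  have hKf : HasCompactSupport (fderiv ℝ u) := hsupp.fderiv (𝕜 := ℝ)
  set K : Set (E N) := tsupport u ∪ tsupport (fderiv ℝ u) with hK_def
  have hKcomp : IsCompact K := hsupp.union hKf
  have hKu : ∀ x ∉ K, u x = 0 := fun x hx =>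
    image_eq_zero_of_notMem_tsupport (fun h => hx (Set.mem_union_left _ h))
  have hKdu : ∀ x ∉ K, fderiv ℝ u x = 0 := fun x hx =>
    image_eq_zero_of_notMem_tsupport (fun h => hx (Set.mem_union_right _ h))
  set g : Fin N → (E N) → ℝ := fun i x => x i * (q x)⁻¹ with hg_def
  set D : Fin N → (E N) → ((E N) →L[ℝ] ℝ) := fun i x =>
    x i • ((-((q x)^2)⁻¹) • (2 • innerSL ℝ x)) + (q x)⁻¹ • (EuclideanSpace.proj i) with hD_def
  set f : (E N) → ℝ := fun x => u x * u x with hf_def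
  set f' : (E N) → ((E N) →L[ℝ] ℝ) := fun x => u x • fderiv ℝ u x + u x • fderiv ℝ u x
    with hf'_def
  have hfd : ∀ x, HasFDerivAt f (f' x) x := fun x => (hud x).hasFDerivAt.mul (hud x).hasFDerivAt
  have hgd : ∀ i (x : E N), HasFDerivAt (g i) (D i x) x := fun i x => hasFDerivAt_g ε hε i x
  have hDval : ∀ i (x : E N) (j : Fin N), D i x (EuclideanSpace.single j (1:ℝ)) =
      -(x i * ((q x ^ 2)⁻¹ * (2 * x j))) + (q x)⁻¹ * (if i = j then 1 else 0) := by
    intro i x j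
    simp [hD_def, EuclideanSpace.inner_single_right, EuclideanSpace.single_apply]
  have hf'val : ∀ (x : E N) (v : E N), f' x v = 2 * u x * fderiv ℝ u x v := by
    intro x v
    simp [hf'_def]; ring
  have hcoord : ∀ i, Continuous fun x : E N => x i := fun i =>
    (EuclideanSpace.proj (𝕜 := ℝ) (i := i)).continuous.congr fun x => by simp
  have heval : ∀ v : E N, Continuous fun x : E N => fderiv ℝ u x v := fun v =>
    (ContinuousLinearMap.apply ℝ ℝ v).continuous.comp hfd'cont
  have hnormsq : Continuous fun x : E N => ‖x‖^2 := by fun_prop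
  have hint : ∀ (φ : (E N) → ℝ), Continuous φ → (∀ x ∉ K, φ x = 0) → Integrable φ :=
    fun φ hc h0 => hc.integrable_of_hasCompactSupport (HasCompactSupport.intro hKcomp h0)
  have hgdiff : ∀ i, Differentiable ℝ (g i) := fun i x => (hgd i x).differentiableAt
  have hgfderiv : ∀ i (x : E N), fderiv ℝ (g i) x = D i x := fun i x => (hgd i x).fderiv
  have hffderiv : ∀ x : E N, fderiv ℝ f x = f' x := fun x => (hfd x).fderiv
  have hfdiff : Differentiable ℝ f := fun x => (hfd x).differentiableAt
  have hDcont : ∀ i, Continuous fun x : E N => D i x (EuclideanSpace.single i (1:ℝ)) := by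
    intro i
    have : (fun x : E N => D i x (EuclideanSpace.single i (1:ℝ)))
        = fun x : E N => -(x i * ((q x ^ 2)⁻¹ * (2 * x i))) + (q x)⁻¹ * 1 := by
      funext x; rw [hDval i x i]; simp
    rw [this]
    have h2 : Continuous fun x : E N => (q x ^ 2)⁻¹ :=
      (hqcont.pow 2).inv₀ fun x => pow_ne_zero 2 (hqpos x).ne'
    exact (((hcoord i).mul (h2.mul (continuous_const.mul (hcoord i)))).neg).add
      (hqinv_cont.mul continuous_const)
  have hgcont : ∀ i, Continuous (g i) := fun i => (hcoord i).mul hqinv_cont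
  -- the per-coordinate integration by parts
  have key : ∀ i, ∫ x : E N, f x * (D i x (EuclideanSpace.single i (1:ℝ)))
      = - ∫ x : E N, (f' x (EuclideanSpace.single i (1:ℝ))) * g i x := by
    intro i
    have h1 : Integrable fun x : E N =>
        fderiv ℝ f x (EuclideanSpace.single i (1:ℝ)) * g i x := by
      refine hint _ ?_ ?_
      · have : Continuous fun x : E N => fderiv ℝ f x (EuclideanSpace.single i (1:ℝ)) := by
          have := (ContinuousLinearMap.apply ℝ ℝ
            (EuclideanSpace.single i (1:ℝ))).continuous.comp
            ((hu.mul hu).fderiv_right (m := 0) le_rfl).continuous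
          exact this
        exact this.mul (hgcont i)
      · intro x hx
        have : fderiv ℝ f x = f' x := hffderiv x
        simp [this, hf'_def, hKu x hx, hKdu x hx]
    have h2 : Integrable fun x : E N =>
        f x * fderiv ℝ (g i) x (EuclideanSpace.single i (1:ℝ)) := by
      refine hint _ ?_ ?_
      · have : Continuous fun x : E N => fderiv ℝ (g i) x (EuclideanSpace.single i (1:ℝ)) := by
          have := hDcont i
          refine Continuous.congr this fun x => ?_
          rw [hgfderiv i x]
        exact (hucont.mul hucont).mul this
      · intro x hx; simp [hf_def, hKu x hx]
    have h3 : Integrable fun x : E N => f x * g i x := by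
      refine hint _ ((hucont.mul hucont).mul (hgcont i)) fun x hx => by simp [hf_def, hKu x hx]
    have := integral_mul_fderiv_eq_neg_fderiv_mul_of_integrable h1 h2 h3 (fun x _ => hfdiff x) (fun x _ => hgdiff i x)
    calc ∫ x : E N, f x * (D i x (EuclideanSpace.single i (1:ℝ)))
        = ∫ x : E N, f x * fderiv ℝ (g i) x (EuclideanSpace.single i (1:ℝ)) :=
          integral_congr_ae (Filter.Eventually.of_forall fun x => by simp only []; rw [hgfderiv i x])
      _ = - ∫ x : E N, fderiv ℝ f x (EuclideanSpace.single i (1:ℝ)) * g i x := this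
      _ = - ∫ x : E N, (f' x (EuclideanSpace.single i (1:ℝ))) * g i x :=
          congrArg Neg.neg
            (integral_congr_ae (Filter.Eventually.of_forall fun x => by simp only []; rw [hffderiv x]))
  -- sum expansion of a vector
  have hxsum : ∀ x : E N, x = ∑ i, x i • EuclideanSpace.single i (1:ℝ) := by
    intro x
    have := (EuclideanSpace.basisFun (Fin N) ℝ).sum_repr x
    simp only [EuclideanSpace.basisFun_repr, EuclideanSpace.basisFun_apply] at this
    exact this.symm
  have hnormx : ∀ x : E N, ‖x‖^2 = ∑ i, (x i)^2 := by
    intro x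
    rw [EuclideanSpace.norm_sq_eq]
    simp [Real.norm_eq_abs, sq_abs]
  have hDsum : ∀ x : E N, ∑ i, D i x (EuclideanSpace.single i (1:ℝ))
      = (N:ℝ) * (q x)⁻¹ - 2 * ‖x‖^2 * ((q x)^2)⁻¹ := by
    intro x
    have step : ∀ i : Fin N, D i x (EuclideanSpace.single i (1:ℝ))
        = (-(2*((q x)^2)⁻¹)) * (x i)^2 + (q x)⁻¹ := by
      intro i; rw [hDval i x i]; simp; ring
    rw [Finset.sum_congr rfl fun i _ => step i, Finset.sum_add_distrib, ← Finset.mul_sum,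
      ← hnormx x]
    simp [Finset.card_univ]
    ring
  have hsum2 : ∀ x : E N, ∑ i, f' x (EuclideanSpace.single i (1:ℝ)) * g i x
      = (2 * u x * fderiv ℝ u x x) * (q x)⁻¹ := by
    intro x
    have h1 : f' x (∑ i, x i • EuclideanSpace.single i (1:ℝ))
        = ∑ i, x i * f' x (EuclideanSpace.single i (1:ℝ)) := by
      rw [map_sum]
      simp [smul_eq_mul]
    have h2 : ∑ i, f' x (EuclideanSpace.single i (1:ℝ)) * g i x
        = (∑ i, x i * f' x (EuclideanSpace.single i (1:ℝ))) * (q x)⁻¹ := by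
      rw [Finset.sum_mul]
      refine Finset.sum_congr rfl fun i _ => ?_
      simp [hg_def]; ring
    rw [h2, ← h1, ← hxsum x, hf'val x x]
  have int2 : ∀ i, Integrable fun x : E N => f x * D i x (EuclideanSpace.single i (1:ℝ)) :=
    fun i => hint _ ((hucont.mul hucont).mul (hDcont i))
      fun x hx => by simp [hf_def, hKu x hx]
  have int1 : ∀ i, Integrable fun x : E N =>
      f' x (EuclideanSpace.single i (1:ℝ)) * g i x := by
    intro i
    refine hint _ ?_ fun x hx => by simp [hf'_def, hKu x hx, hKdu x hx]
    have : Continuous fun x : E N => f' x (EuclideanSpace.single i (1:ℝ)) := by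
      have := (hucont.mul (heval (EuclideanSpace.single i (1:ℝ)))).add
        (hucont.mul (heval (EuclideanSpace.single i (1:ℝ))))
      refine this.congr fun x => ?_
      simp [hf'_def]
    exact this.mul (hgcont i)
  calc ∫ x : E N, (u x * u x) * ((N:ℝ) * (‖x‖^2 + ε)⁻¹ - 2 * ‖x‖^2 * ((‖x‖^2 + ε)^2)⁻¹)
      = ∫ x : E N, ∑ i, f x * D i x (EuclideanSpace.single i (1:ℝ)) :=
        integral_congr_ae (Filter.Eventually.of_forall fun x => by
          simp only [← Finset.mul_sum, hDsum x, hf_def, hq_def])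
    _ = ∑ i, ∫ x : E N, f x * D i x (EuclideanSpace.single i (1:ℝ)) :=
        integral_finset_sum _ (fun i _ => int2 i)
    _ = ∑ i, -∫ x : E N, f' x (EuclideanSpace.single i (1:ℝ)) * g i x :=
        Finset.sum_congr rfl fun i _ => key i
    _ = -∑ i, ∫ x : E N, f' x (EuclideanSpace.single i (1:ℝ)) * g i x := by
        rw [← Finset.sum_neg_distrib]
    _ = -∫ x : E N, ∑ i, f' x (EuclideanSpace.single i (1:ℝ)) * g i x := by
        rw [integral_finset_sum _ (fun i _ => int1 i)]
    _ = - ∫ x : E N, (2 * u x * (fderiv ℝ u x x)) * (‖x‖^2 + ε)⁻¹ :=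
        congrArg Neg.neg (integral_congr_ae (Filter.Eventually.of_forall fun x => by
          simp only [hsum2 x, hq_def]))

lemma key_ineq {N : ℕ} (hN : 2 < N) (u : (E N) → ℝ) (hu : ContDiff ℝ 1 u)
    (hsupp : HasCompactSupport u) {ε : ℝ} (hε : 0 < ε) :
    (((N:ℝ) - 2) / 2)^2 * ∫ x : E N, (u x * u x) * (‖x‖^2 + ε)⁻¹
      ≤ ∫ x : E N, ‖gradient u x‖^2 := by
  classical
  set lam : ℝ := ((N:ℝ) - 2) / 2 with hlam_def
  have hlam : 0 < lam := by
    have : (2:ℝ) < N := by exact_mod_cast hN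
    simp only [hlam_def]; linarith
  set q : (E N) → ℝ := fun x => ‖x‖^2 + ε with hq_def
  have hqpos : ∀ x : E N, 0 < q x := fun x => by positivity
  have hqcont : Continuous q := by fun_prop
  have hqinv_cont : Continuous fun x : E N => (q x)⁻¹ := hqcont.inv₀ fun x => (hqpos x).ne'
  have hq2inv_cont : Continuous fun x : E N => ((q x)^2)⁻¹ :=
    (hqcont.pow 2).inv₀ fun x => pow_ne_zero 2 (hqpos x).ne'
  have hucont : Continuous u := hu.continuous
  have hfd'cont : Continuous (fderiv ℝ u) := (hu.fderiv_right (m := 0) le_rfl).continuous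
  have hKf : HasCompactSupport (fderiv ℝ u) := hsupp.fderiv (𝕜 := ℝ)
  set K : Set (E N) := tsupport u ∪ tsupport (fderiv ℝ u) with hK_def
  have hKcomp : IsCompact K := hsupp.union hKf
  have hKu : ∀ x ∉ K, u x = 0 := fun x hx =>
    image_eq_zero_of_notMem_tsupport (fun h => hx (Set.mem_union_left _ h))
  have hKdu : ∀ x ∉ K, fderiv ℝ u x = 0 := fun x hx =>
    image_eq_zero_of_notMem_tsupport (fun h => hx (Set.mem_union_right _ h))
  have hint : ∀ (φ : (E N) → ℝ), Continuous φ → (∀ x ∉ K, φ x = 0) → Integrable φ :=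
    fun φ hc h0 => hc.integrable_of_hasCompactSupport (HasCompactSupport.intro hKcomp h0)
  have hgradcont : Continuous (gradient u) :=
    (InnerProductSpace.toDual ℝ _).symm.continuous.comp hfd'cont
  have hgradzero : ∀ x ∉ K, gradient u x = 0 := by
    intro x hx
    have : gradient u x = (InnerProductSpace.toDual ℝ _).symm (fderiv ℝ u x) := rfl
    rw [this, hKdu x hx]; simp
  have hfxx_cont : Continuous fun x : E N => fderiv ℝ u x x :=
    isBoundedBilinearMap_apply.continuous.comp (hfd'cont.prodMk continuous_id)
  have hnormsq : Continuous fun x : E N => ‖x‖^2 := by fun_prop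
  -- integrabilities
  have intGrad : Integrable fun x : E N => ‖gradient u x‖^2 :=
    hint _ (by fun_prop) fun x hx => by rw [hgradzero x hx]; simp
  have intA : Integrable fun x : E N => (u x * u x) * (q x)⁻¹ :=
    hint _ ((hucont.mul hucont).mul hqinv_cont) fun x hx => by simp [hKu x hx]
  have intM : Integrable fun x : E N => (u x * u x) * (‖x‖^2 * ((q x)^2)⁻¹) :=
    hint _ ((hucont.mul hucont).mul (hnormsq.mul hq2inv_cont))
      fun x hx => by simp [hKu x hx]
  have intJ : Integrable fun x : E N =>
      (u x * u x) * ((N:ℝ) * (q x)⁻¹ - 2 * ‖x‖^2 * ((q x)^2)⁻¹) :=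
    hint _ ((hucont.mul hucont).mul ((continuous_const.mul hqinv_cont).sub
      ((continuous_const.mul hnormsq).mul hq2inv_cont))) fun x hx => by simp [hKu x hx]
  have intB : Integrable fun x : E N => (2 * u x * fderiv ℝ u x x) * (q x)⁻¹ :=
    hint _ (((continuous_const.mul hucont).mul hfxx_cont).mul hqinv_cont)
      fun x hx => by simp [hKu x hx]
  -- pointwise completing the square
  have pt : ∀ x : E N,
      -(lam * ((2 * u x * fderiv ℝ u x x) * (q x)⁻¹))
        - lam^2 * ((u x * u x) * (‖x‖^2 * ((q x)^2)⁻¹)) ≤ ‖gradient u x‖^2 := by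
    intro x
    have h0 : (0:ℝ) ≤ ‖gradient u x + ((lam * u x) * (q x)⁻¹) • x‖^2 := sq_nonneg _
    rw [norm_add_sq_real] at h0
    have hab : inner ℝ (gradient u x) (((lam * u x) * (q x)⁻¹) • x)
        = ((lam * u x) * (q x)⁻¹) * fderiv ℝ u x x := by
      rw [real_inner_smul_right]
      congr 1
      simp [gradient]
    have hb : ‖((lam * u x) * (q x)⁻¹) • x‖^2 = ((lam * u x) * (q x)⁻¹)^2 * ‖x‖^2 := by
      rw [norm_smul, mul_pow, Real.norm_eq_abs, sq_abs]
    rw [hab, hb] at h0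
    have hq2 : ((q x)^2)⁻¹ = ((q x)⁻¹)^2 := by rw [inv_pow]
    rw [hq2]
    nlinarith [h0]
  -- integrate the pointwise inequality
  have intLHS : Integrable fun x : E N =>
      -(lam * ((2 * u x * fderiv ℝ u x x) * (q x)⁻¹))
        - lam^2 * ((u x * u x) * (‖x‖^2 * ((q x)^2)⁻¹)) :=
    ((intB.const_mul lam).neg).sub (intM.const_mul (lam^2))
  have step1 : ∫ x : E N, (-(lam * ((2 * u x * fderiv ℝ u x x) * (q x)⁻¹))
        - lam^2 * ((u x * u x) * (‖x‖^2 * ((q x)^2)⁻¹))) ≤ ∫ x : E N, ‖gradient u x‖^2 :=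
    integral_mono intLHS intGrad pt
  -- evaluate the left side using ibp
  have hsplit : ∫ x : E N, (-(lam * ((2 * u x * fderiv ℝ u x x) * (q x)⁻¹))
        - lam^2 * ((u x * u x) * (‖x‖^2 * ((q x)^2)⁻¹)))
      = lam * (∫ x : E N, (u x * u x) * ((N:ℝ) * (q x)⁻¹ - 2 * ‖x‖^2 * ((q x)^2)⁻¹))
        - lam^2 * ∫ x : E N, (u x * u x) * (‖x‖^2 * ((q x)^2)⁻¹) := by
    have e1 := integral_sub ((intB.const_mul lam).neg) (intM.const_mul (lam^2))
    simp only [Pi.neg_apply] at e1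
    rw [e1, integral_neg, integral_const_mul, integral_const_mul, ibp u hu hsupp hε]
    ring
  -- J = N A - 2 M
  have hJ : ∫ x : E N, (u x * u x) * ((N:ℝ) * (q x)⁻¹ - 2 * ‖x‖^2 * ((q x)^2)⁻¹)
      = (N:ℝ) * (∫ x : E N, (u x * u x) * (q x)⁻¹)
        - 2 * ∫ x : E N, (u x * u x) * (‖x‖^2 * ((q x)^2)⁻¹) := by
    rw [← integral_const_mul, ← integral_const_mul,
      ← integral_sub (intA.const_mul _) (intM.const_mul _)]
    refine integral_congr_ae (Filter.Eventually.of_forall fun x => ?_)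
    simp only []
    ring
  -- M ≤ A
  have hMA : ∫ x : E N, (u x * u x) * (‖x‖^2 * ((q x)^2)⁻¹)
      ≤ ∫ x : E N, (u x * u x) * (q x)⁻¹ := by
    refine integral_mono intM intA fun x => ?_
    simp only []
    have h1 : ‖x‖^2 * ((q x)^2)⁻¹ ≤ (q x)⁻¹ := by
      have hle : ‖x‖^2 ≤ q x := by
        simp only [hq_def]; linarith
      calc ‖x‖^2 * ((q x)^2)⁻¹ ≤ q x * ((q x)^2)⁻¹ :=
            mul_le_mul_of_nonneg_right hle (by positivity)
        _ = (q x)⁻¹ := by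
            rw [sq, mul_inv, ← mul_assoc, mul_inv_cancel₀ (hqpos x).ne', one_mul]
    have h2 : (0:ℝ) ≤ u x * u x := mul_self_nonneg _
    exact mul_le_mul_of_nonneg_left h1 h2
  have hMnonneg : 0 ≤ ∫ x : E N, (u x * u x) * (‖x‖^2 * ((q x)^2)⁻¹) :=
    integral_nonneg fun x => mul_nonneg (mul_self_nonneg _) (by positivity)
  have hN' : (2:ℝ) < N := by exact_mod_cast hN
  calc lam^2 * ∫ x : E N, (u x * u x) * (q x)⁻¹
      = lam * ((N:ℝ) * (∫ x : E N, (u x * u x) * (q x)⁻¹))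
        - (2 * lam + lam^2) * ∫ x : E N, (u x * u x) * (q x)⁻¹ := by
        simp only [hlam_def]; ring
    _ ≤ lam * ((N:ℝ) * (∫ x : E N, (u x * u x) * (q x)⁻¹))
        - (2 * lam + lam^2) * ∫ x : E N, (u x * u x) * (‖x‖^2 * ((q x)^2)⁻¹) := by
        have : (0:ℝ) ≤ 2 * lam + lam^2 := by positivity
        nlinarith [hMA]
    _ = lam * ((N:ℝ) * (∫ x : E N, (u x * u x) * (q x)⁻¹)
          - 2 * ∫ x : E N, (u x * u x) * (‖x‖^2 * ((q x)^2)⁻¹))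
        - lam^2 * ∫ x : E N, (u x * u x) * (‖x‖^2 * ((q x)^2)⁻¹) := by ring
    _ = lam * (∫ x : E N, (u x * u x) * ((N:ℝ) * (q x)⁻¹ - 2 * ‖x‖^2 * ((q x)^2)⁻¹))
        - lam^2 * ∫ x : E N, (u x * u x) * (‖x‖^2 * ((q x)^2)⁻¹) := by rw [hJ]
    _ ≤ ∫ x : E N, ‖gradient u x‖^2 := by rw [← hsplit]; exact step1

theorem stmt_5 (N : ℕ) (hN : 2 < N)
    (u : EuclideanSpace ℝ (Fin N) → ℝ)
    (hu : ContDiff ℝ 1 u) (hsupp : HasCompactSupport u) :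
    ∫ x, ‖gradient u x‖ ^ (2 : ℕ) ∂volume ≥
      (((N : ℝ) - 2) / 2) ^ (2 : ℕ) * ∫ x, (u x) ^ (2 : ℕ) / ‖x‖ ^ (2 : ℕ) ∂volume := by
  classical
  set lam : ℝ := ((N:ℝ) - 2) / 2 with hlam_def
  have hN' : (2:ℝ) < N := by exact_mod_cast hN
  have hlam : 0 < lam := by simp only [hlam_def]; linarith
  set C : ℝ := ∫ x : E N, ‖gradient u x‖^2 with hC_def
  have hC0 : 0 ≤ C := integral_nonneg fun x => sq_nonneg _
  have hucont : Continuous u := hu.continuous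
  -- the approximating integrals
  have hqpos : ∀ (n : ℕ) (x : E N), (0:ℝ) < ‖x‖^2 + 1/(n+1) := by
    intro n x; positivity
  have hAint : ∀ n : ℕ, Integrable fun x : E N => (u x * u x) * (‖x‖^2 + 1/(n+1))⁻¹ := by
    intro n
    refine Continuous.integrable_of_hasCompactSupport
      ((hucont.mul hucont).mul ((by fun_prop : Continuous fun x : E N => ‖x‖^2 + 1/(n+1)).inv₀
        fun x => (hqpos n x).ne')) ?_
    refine HasCompactSupport.intro hsupp fun x hx => ?_
    simp [image_eq_zero_of_notMem_tsupport hx]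
  have hkey : ∀ n : ℕ, lam^2 * ∫ x : E N, (u x * u x) * (‖x‖^2 + 1/(n+1))⁻¹ ≤ C :=
    fun n => key_ineq hN u hu hsupp (by positivity : (0:ℝ) < 1/(n+1))
  have hAle : ∀ n : ℕ, ∫ x : E N, (u x * u x) * (‖x‖^2 + 1/(n+1))⁻¹ ≤ C / lam^2 := by
    intro n
    rw [le_div_iff₀ (by positivity)]
    calc (∫ x : E N, (u x * u x) * (‖x‖^2 + 1/(n+1))⁻¹) * lam^2
        = lam^2 * ∫ x : E N, (u x * u x) * (‖x‖^2 + 1/(n+1))⁻¹ := by ring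
      _ ≤ C := hkey n
  -- lintegral limit argument
  set F : ℕ → (E N) → ENNReal := fun n x => ENNReal.ofReal ((u x * u x) * (‖x‖^2 + 1/(n+1))⁻¹)
    with hF_def
  set G : (E N) → ENNReal := fun x => ENNReal.ofReal ((u x * u x) * (‖x‖^2)⁻¹) with hG_def
  have hFmeas : ∀ n, AEMeasurable (F n) := by
    intro n
    exact (((hucont.mul hucont).measurable.mul
      (((continuous_norm.pow 2).add continuous_const).measurable.inv)).ennreal_ofReal).aemeasurable
  have hFmono : ∀ᵐ x : E N ∂volume, Monotone fun n => F n x := by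
    refine Filter.Eventually.of_forall fun x => ?_
    intro m n hmn
    refine ENNReal.ofReal_le_ofReal ?_
    refine mul_le_mul_of_nonneg_left ?_ (mul_self_nonneg _)
    refine inv_anti₀ (hqpos n x) ?_
    have : (1:ℝ)/(n+1) ≤ 1/(m+1) := by
      apply one_div_le_one_div_of_le (by positivity)
      have : (m:ℝ) ≤ n := by exact_mod_cast hmn
      linarith
    linarith
  have hne : ∀ᵐ x : E N ∂volume, x ≠ 0 := by
    haveI : Nontrivial (E N) :=
      ⟨0, EuclideanSpace.single ⟨0, by omega⟩ (1:ℝ), by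
        intro h
        have := congrArg (fun v : E N => v ⟨0, by omega⟩) h.symm
        simp [EuclideanSpace.single_apply] at this⟩
    haveI : NullSingletonClass (volume : Measure (E N)) := inferInstance
    rw [Filter.eventually_iff, mem_ae_iff]
    simpa using measure_singleton (0 : E N)
  have hFtend : ∀ᵐ x : E N ∂volume, Filter.Tendsto (fun n => F n x) Filter.atTop (nhds (G x)) := by
    filter_upwards [hne] with x hx
    have hx2 : (0:ℝ) < ‖x‖^2 := by
      have : 0 < ‖x‖ := norm_pos_iff.mpr hx
      positivity
    refine (ENNReal.continuous_ofReal.tendsto _).comp ?_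
    have h1 : Filter.Tendsto (fun n : ℕ => ‖x‖^2 + 1/(n+1)) Filter.atTop (nhds (‖x‖^2)) := by
      have := tendsto_one_div_add_atTop_nhds_zero_nat (𝕜 := ℝ)
      have h2 := this.const_add (‖x‖^2)
      simpa using h2
    have h3 : Filter.Tendsto (fun n : ℕ => (‖x‖^2 + 1/(n+1))⁻¹) Filter.atTop
        (nhds ((‖x‖^2)⁻¹)) := h1.inv₀ hx2.ne'
    simpa using h3.const_mul (u x * u x)
  have hmain : Filter.Tendsto (fun n => ∫⁻ x : E N, F n x ∂volume) Filter.atTop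
      (nhds (∫⁻ x : E N, G x ∂volume)) :=
    lintegral_tendsto_of_tendsto_of_monotone hFmeas hFmono hFtend
  have hFn_eq : ∀ n, ∫⁻ x : E N, F n x ∂volume
      = ENNReal.ofReal (∫ x : E N, (u x * u x) * (‖x‖^2 + 1/(n+1))⁻¹) := by
    intro n
    rw [← ofReal_integral_eq_lintegral_ofReal (hAint n)]
    exact Filter.Eventually.of_forall fun x => mul_nonneg (mul_self_nonneg _) (by positivity)
  have hGle : ∫⁻ x : E N, G x ∂volume ≤ ENNReal.ofReal (C / lam^2) := by
    refine le_of_tendsto hmain (Filter.Eventually.of_forall fun n => ?_)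
    rw [hFn_eq n]
    exact ENNReal.ofReal_le_ofReal (hAle n)
  -- identify the Bochner integral with the lintegral
  have hInt_eq : ∫ x : E N, (u x)^(2:ℕ) / ‖x‖^(2:ℕ) ∂volume
      = (∫⁻ x : E N, G x ∂volume).toReal := by
    rw [integral_eq_lintegral_of_nonneg_ae (f := fun x : E N => (u x)^(2:ℕ) / ‖x‖^(2:ℕ))
      (Filter.Eventually.of_forall fun x => by positivity)
      (((hucont.pow 2).measurable.div
        ((continuous_norm.pow 2).measurable)).aestronglyMeasurable)]
    congr 1
    refine lintegral_congr fun x => ?_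
    rw [hG_def]
    congr 1
    rw [div_eq_mul_inv, sq]
  have hfinal : ∫ x : E N, (u x)^(2:ℕ) / ‖x‖^(2:ℕ) ∂volume ≤ C / lam^2 := by
    rw [hInt_eq]
    calc (∫⁻ x : E N, G x ∂volume).toReal
        ≤ (ENNReal.ofReal (C / lam^2)).toReal :=
          ENNReal.toReal_mono ENNReal.ofReal_ne_top hGle
      _ = C / lam^2 := ENNReal.toReal_ofReal (by positivity)
  have : lam^2 * ∫ x : E N, (u x)^(2:ℕ) / ‖x‖^(2:ℕ) ∂volume ≤ C := by
    rw [← le_div_iff₀' (by positivity : (0:ℝ) < lam^2)]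
    exact hfinal
  simpa [hC_def, ge_iff_le, hlam_def] using this
end

section
/- Let N ≥ 2, let B be the open unit ball in ℝᴺ centered at 0, and let u ∈ C_c^1(B \ {0}). Then ∫_B ‖∇u‖^N dx ≥ ((N-1)/N)^N ∫_B |u(x)|^N / (‖x‖^N |log ‖x‖|^N) dx. -/
open MeasureTheory

/-! Auxiliary lemmas for the critical Hardy inequality. -/

theorem hardyAux_absPow_hasDerivAt (M : ℕ) (t : ℝ) :
    HasDerivAt (fun t : ℝ => |t| ^ (M + 2)) (((M:ℝ) + 2) * t * |t| ^ M) t := by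
  rcases lt_trichotomy t 0 with ht | rfl | ht
  · have hev : (fun t : ℝ => |t| ^ (M + 2)) =ᶠ[nhds t] (fun t : ℝ => (-t) ^ (M + 2)) := by
      filter_upwards [Iio_mem_nhds ht] with y (hy : y < 0)
      rw [abs_of_neg hy]
    have hd : HasDerivAt (fun t : ℝ => (-t) ^ (M + 2))
        (((M:ℝ) + 2) * t * |t| ^ M) t := by
      have h2 := ((hasDerivAt_id t).neg.pow (M + 2))
      refine h2.congr_deriv ?_
      rw [abs_of_neg ht, show M + 2 - 1 = M + 1 from rfl]
      simp only [Pi.neg_apply, id_eq]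
      push_cast
      rw [pow_succ]
      ring
    exact hd.congr_of_eventuallyEq hev
  · have h0 : ((M:ℝ) + 2) * 0 * |(0:ℝ)| ^ M = 0 := by ring
    rw [h0, hasDerivAt_iff_isLittleO_nhds_zero]
    simp only [zero_add, smul_eq_mul, mul_zero, sub_zero, abs_zero]
    have hz : ∀ h : ℝ, |h| ^ (M + 2) - (0:ℝ) ^ (M+2) = |h| ^ (M+2) := by
      intro h; rw [zero_pow (by omega), sub_zero]
    refine Asymptotics.IsLittleO.congr' (f₁ := fun h : ℝ => |h| ^ (M + 2)) ?_
      (by filter_upwards with h; rw [hz h]) (by rfl)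
    rw [Asymptotics.isLittleO_iff]
    intro c hc
    filter_upwards [Metric.ball_mem_nhds (0:ℝ) (lt_min one_pos hc)] with h hh
    rw [Metric.mem_ball, Real.dist_eq, sub_zero] at hh
    have h1 : |h| ≤ 1 := le_of_lt (lt_of_lt_of_le hh (min_le_left _ _))
    have h2 : |h| ≤ c := le_of_lt (lt_of_lt_of_le hh (min_le_right _ _))
    have : |h| ^ (M + 2) ≤ c * |h| := by
      rw [pow_succ]
      gcongr
      calc |h| ^ (M+1) ≤ |h| := pow_le_of_le_one (abs_nonneg h) h1 (by omega)
        _ ≤ c := h2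
    simpa [abs_of_nonneg (pow_nonneg (abs_nonneg h) (M+2))] using this
  · have hev : (fun t : ℝ => |t| ^ (M + 2)) =ᶠ[nhds t] (fun t : ℝ => t ^ (M + 2)) := by
      filter_upwards [Ioi_mem_nhds ht] with y (hy : 0 < y)
      rw [abs_of_pos hy]
    have hd : HasDerivAt (fun t : ℝ => t ^ (M + 2)) (((M:ℝ) + 2) * t * |t| ^ M) t := by
      have h2 := hasDerivAt_pow (M + 2) t
      refine h2.congr_deriv ?_
      rw [abs_of_pos ht, show M + 2 - 1 = M + 1 from rfl]
      push_cast
      rw [pow_succ]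
      ring
    exact hd.congr_of_eventuallyEq hev

noncomputable def hardyAux_hh (N : ℕ) (s : ℝ) : ℝ :=
  s ^ (-(N:ℝ)/2) * ((-1/2) * Real.log s) ^ ((1:ℝ) - N)

noncomputable def hardyAux_hh' (N : ℕ) (s : ℝ) : ℝ :=
  (-(N:ℝ)/2) * s ^ (-(N:ℝ)/2 - 1) * ((-1/2) * Real.log s) ^ ((1:ℝ) - N) +
    s ^ (-(N:ℝ)/2) *
      ((((1:ℝ) - N) * ((-1/2) * Real.log s) ^ ((1:ℝ) - N - 1)) * ((-1/2) * s⁻¹))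

theorem hardyAux_hh_hasDerivAt (N : ℕ) {s : ℝ} (h0 : 0 < s) (h1 : s < 1) :
    HasDerivAt (hardyAux_hh N) (hardyAux_hh' N s) s := by
  have hlog : Real.log s < 0 := Real.log_neg h0 h1
  have hL : (0:ℝ) < (-1/2) * Real.log s := by nlinarith
  have hd1 : HasDerivAt (fun s : ℝ => s ^ (-(N:ℝ)/2))
      ((-(N:ℝ)/2) * s ^ (-(N:ℝ)/2 - 1)) s :=
    Real.hasDerivAt_rpow_const (Or.inl h0.ne')
  have hdlog : HasDerivAt (fun s : ℝ => (-1/2) * Real.log s) ((-1/2) * s⁻¹) s :=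
    (Real.hasDerivAt_log h0.ne').const_mul _
  have hdout : HasDerivAt (fun y : ℝ => y ^ ((1:ℝ) - N))
      (((1:ℝ) - N) * ((-1/2) * Real.log s) ^ ((1:ℝ) - N - 1)) ((-1/2) * Real.log s) :=
    Real.hasDerivAt_rpow_const (Or.inl hL.ne')
  exact hd1.mul (by exact hdout.comp s hdlog)

theorem hardyAux_hh_contDiffAt (N : ℕ) {s : ℝ} (h0 : 0 < s) (h1 : s < 1) :
    ContDiffAt ℝ 1 (hardyAux_hh N) s := by
  have hlog : Real.log s < 0 := Real.log_neg h0 h1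
  have hL : (0:ℝ) < (-1/2) * Real.log s := by nlinarith
  have c1 : ContDiffAt ℝ 1 (fun s : ℝ => s ^ (-(N:ℝ)/2)) s :=
    Real.contDiffAt_rpow_const_of_ne h0.ne'
  have c2 : ContDiffAt ℝ 1 (fun s : ℝ => ((-1/2) * Real.log s) ^ ((1:ℝ) - N)) s := by
    have cl : ContDiffAt ℝ 1 (fun s : ℝ => (-1/2) * Real.log s) s :=
      (Real.contDiffAt_log.2 h0.ne').const_smul (-1/2 : ℝ)
    exact (Real.contDiffAt_rpow_const_of_ne hL.ne').comp s cl
  exact c1.mul c2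

theorem hardyAux_rpow_neg_nat {a : ℝ} (ha : 0 < a) (k : ℕ) :
    a ^ (-(k:ℝ)) = (a ^ k)⁻¹ := by
  rw [Real.rpow_neg ha.le, Real.rpow_natCast]

theorem hardyAux_hh_sq_eq (M : ℕ) {r : ℝ} (h0 : 0 < r) (h1 : r < 1) :
    hardyAux_hh (M+2) (r^2) = (r ^ (M+2))⁻¹ * ((-Real.log r) ^ (M+1))⁻¹ := by
  have hlog : Real.log r < 0 := Real.log_neg h0 h1
  have hL : (0:ℝ) < -Real.log r := by linarith
  have hls : (-1/2 : ℝ) * Real.log (r^2) = -Real.log r := by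
    rw [Real.log_pow]; push_cast; ring
  have hsq : ∀ p : ℝ, (r^2) ^ p = r ^ (2*p) := by
    intro p
    rw [← Real.rpow_natCast r 2, ← Real.rpow_mul h0.le]
    norm_num
  rw [hardyAux_hh, hls, hsq]
  have e1 : 2 * (-((M:ℝ)+2)/2) = -((M+2:ℕ):ℝ) := by push_cast; ring
  have e2 : (1:ℝ) - ((M:ℕ)+2) = -((M+1:ℕ):ℝ) := by push_cast; ring
  push_cast
  rw [e1, e2, hardyAux_rpow_neg_nat h0, hardyAux_rpow_neg_nat hL]

theorem hardyAux_hh'_sq_eq (M : ℕ) {r : ℝ} (h0 : 0 < r) (h1 : r < 1) :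
    hardyAux_hh' (M+2) (r^2) =
      (-((M:ℝ)+2)/2) * (r ^ (M+4))⁻¹ * ((-Real.log r) ^ (M+1))⁻¹ +
        (r ^ (M+2))⁻¹ *
          ((-((M:ℝ)+1)) * ((-Real.log r) ^ (M+2))⁻¹ * ((-1/2) * (r^2)⁻¹)) := by
  have hlog : Real.log r < 0 := Real.log_neg h0 h1
  have hL : (0:ℝ) < -Real.log r := by linarith
  have hls : (-1/2 : ℝ) * Real.log (r^2) = -Real.log r := by
    rw [Real.log_pow]; push_cast; ring
  have hsq : ∀ p : ℝ, (r^2) ^ p = r ^ (2*p) := by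
    intro p
    rw [← Real.rpow_natCast r 2, ← Real.rpow_mul h0.le]
    norm_num
  rw [hardyAux_hh', hls, hsq, hsq]
  have e1 : 2 * (-((M:ℝ)+2)/2) = -((M+2:ℕ):ℝ) := by push_cast; ring
  have e1' : 2 * (-((M:ℝ)+2)/2 - 1) = -((M+4:ℕ):ℝ) := by push_cast; ring
  have e2 : (1:ℝ) - ((M:ℕ)+2) = -((M+1:ℕ):ℝ) := by push_cast; ring
  have e3 : (1:ℝ) - ((M:ℕ)+2) - 1 = -((M+2:ℕ):ℝ) := by push_cast; ring
  push_cast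
  rw [e1, e1', e3, e2, hardyAux_rpow_neg_nat h0, hardyAux_rpow_neg_nat h0,
    hardyAux_rpow_neg_nat hL, hardyAux_rpow_neg_nat hL]
  push_cast
  ring

theorem hardyAux_div_formula (M : ℕ) {r : ℝ} (h0 : 0 < r) (h1 : r < 1) :
    2 * hardyAux_hh' (M+2) (r^2) * r^2 + ((M:ℝ)+2) * hardyAux_hh (M+2) (r^2) =
      (((M:ℝ)+1)) * (((r * (-Real.log r)) ^ (M+2))⁻¹) := by
  have hlog : Real.log r < 0 := Real.log_neg h0 h1
  have hL : (0:ℝ) < -Real.log r := by linarith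
  rw [hardyAux_hh_sq_eq M h0 h1, hardyAux_hh'_sq_eq M h0 h1, mul_pow]
  field_simp
  ring

theorem hardyAux_norm_V_eq (M : ℕ) {r : ℝ} (h0 : 0 < r) (h1 : r < 1) :
    hardyAux_hh (M+2) (r^2) * r = ((r * (-Real.log r)) ^ (M+1))⁻¹ := by
  have hlog : Real.log r < 0 := Real.log_neg h0 h1
  have hL : (0:ℝ) < -Real.log r := by linarith
  rw [hardyAux_hh_sq_eq M h0 h1, mul_pow]
  field_simp
  ring

theorem hardyAux_hh_sq_pos (M : ℕ) {r : ℝ} (h0 : 0 < r) (h1 : r < 1) :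
    0 < hardyAux_hh (M+2) (r^2) := by
  have hlog : Real.log r < 0 := Real.log_neg h0 h1
  have hL : (0:ℝ) < -Real.log r := by linarith
  rw [hardyAux_hh_sq_eq M h0 h1]
  positivity

theorem hardyAux_young (M : ℕ) {a b : ℝ} (ha : 0 ≤ a) (hb : 0 ≤ b) :
    ((M:ℝ)+2) * (a * b^(M+1)) ≤
      (((M:ℝ)+2)/((M:ℝ)+1))^(M+1) * a^(M+2) + (((M:ℝ)+1)^2/((M:ℝ)+2)) * b^(M+2) := by
  set n : ℝ := (M:ℝ)+2 with hn
  have hn0 : (0:ℝ) < n := by positivity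
  have hM0 : (0:ℝ) ≤ (M:ℝ) := Nat.cast_nonneg M
  have hn1 : (1:ℝ) < n := by rw [hn]; linarith
  have hm1 : (0:ℝ) < (M:ℝ)+1 := by positivity
  set κ : ℝ := n / ((M:ℝ)+1) with hκ
  have hκ0 : (0:ℝ) < κ := by positivity
  set c : ℝ := κ ^ (((M:ℝ)+1)/n) with hc
  have hc0 : (0:ℝ) < c := Real.rpow_pos_of_pos hκ0 _
  have hconj : Real.HolderConjugate n κ := by
    rw [Real.holderConjugate_iff]
    constructor
    · exact hn1
    · rw [hκ]; field_simp
      rw [hn]; ring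
  have key := Real.young_inequality (c * a) (b^(M+1) / c) hconj
  have habs1 : |c * a| = c * a := abs_of_nonneg (by positivity)
  have habs2 : |b^(M+1) / c| = b^(M+1) / c := abs_of_nonneg (by positivity)
  rw [habs1, habs2] at key
  have hL : c * a * (b ^ (M+1) / c) = a * b^(M+1) := by field_simp
  rw [hL] at key
  have h1 : (c * a) ^ n = c^(M+2) * a^(M+2) := by
    rw [hn, show ((M:ℝ)+2) = ((M+2 : ℕ):ℝ) by push_cast; ring, Real.rpow_natCast, mul_pow]
  have h2 : c^(M+2) = κ^(M+1) := by
    rw [hc, ← Real.rpow_natCast (κ ^ (((M:ℝ)+1)/n)) (M+2), ← Real.rpow_mul hκ0.le]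
    have : ((M:ℝ)+1)/n * ((M+2:ℕ):ℝ) = ((M+1:ℕ):ℝ) := by
      push_cast; field_simp [hn]; exact hn.symm
    rw [this, Real.rpow_natCast]
  have h3 : (b^(M+1) / c) ^ κ = b^(M+2) / κ := by
    rw [Real.div_rpow (by positivity) hc0.le]
    congr 1
    · rw [← Real.rpow_natCast b (M+1), ← Real.rpow_mul hb]
      have : ((M+1:ℕ):ℝ) * κ = ((M+2:ℕ):ℝ) := by
        push_cast; rw [hκ, hn]; field_simp
      rw [this, Real.rpow_natCast]
    · rw [hc, ← Real.rpow_mul hκ0.le]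
      have : ((M:ℝ)+1)/n * κ = 1 := by rw [hκ, hn]; field_simp
      rw [this, Real.rpow_one]
  rw [h1, h2, h3] at key
  have hκκ : (b^(M+2)/κ)/κ = (((M:ℝ)+1)^2/n^2) * b^(M+2) := by
    rw [hκ]; field_simp
  rw [hκκ] at key
  have := mul_le_mul_of_nonneg_left key hn0.le
  calc ((M:ℝ)+2) * (a * b^(M+1)) = n * (a * b^(M+1)) := by rw [hn]
    _ ≤ n * (κ^(M+1) * a^(M+2) / n + ((M:ℝ)+1)^2/n^2 * b^(M+2)) := this
    _ = κ^(M+1) * a^(M+2) + (((M:ℝ)+1)^2/n) * b^(M+2) := by field_simp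
    _ = (((M:ℝ)+2)/((M:ℝ)+1))^(M+1) * a^(M+2) + (((M:ℝ)+1)^2/((M:ℝ)+2)) * b^(M+2) := by
        rw [hκ, hn]

theorem hardyAux_clm_sum_apply (n : ℕ) (ℓ : EuclideanSpace ℝ (Fin n) →L[ℝ] ℝ)
    (y : EuclideanSpace ℝ (Fin n)) :
    ∑ i, ℓ (EuclideanSpace.single i 1) * y i = ℓ y := by
  have hy : ∑ i, y i • EuclideanSpace.single i (1:ℝ) = y := by
    have h := (EuclideanSpace.basisFun (Fin n) ℝ).sum_repr y
    simpa [EuclideanSpace.basisFun_repr, EuclideanSpace.basisFun_apply] using h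
  conv_rhs => rw [← hy]
  rw [map_sum]
  refine Finset.sum_congr rfl fun i _ => ?_
  rw [ℓ.map_smul]
  simp [mul_comm]

set_option maxHeartbeats 2000000 in
theorem stmt_10 (N : ℕ) (hN : 2 ≤ N)
    (u : EuclideanSpace ℝ (Fin N) → ℝ)
    (hu : ContDiff ℝ 1 u) (hsupp : HasCompactSupport u)
    (hΩu : tsupport u ⊆ Metric.ball (0 : EuclideanSpace ℝ (Fin N)) 1 \ {0}) :
    ∫ x in Metric.ball (0 : EuclideanSpace ℝ (Fin N)) 1, ‖gradient u x‖ ^ N ∂volume ≥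
      (((N : ℝ) - 1) / N) ^ N *
        ∫ x in Metric.ball (0 : EuclideanSpace ℝ (Fin N)) 1,
          |u x| ^ N / (‖x‖ ^ N * |Real.log ‖x‖| ^ N) ∂volume := by
  obtain ⟨M, rfl⟩ : ∃ M, N = M + 2 := ⟨N - 2, by omega⟩
  set U : Set (EuclideanSpace ℝ (Fin (M+2))) :=
    Metric.ball (0 : EuclideanSpace ℝ (Fin (M+2))) 1 \ {0} with hUdef
  have hUo : IsOpen U := Metric.isOpen_ball.sdiff isClosed_singleton
  have hKU : tsupport u ⊆ U := hΩu
  have hK : IsCompact (tsupport u) := hsupp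
  -- the cutoff function
  obtain ⟨χ, hχ0, hχ1, hχ01⟩ :=
    exists_contMDiffMap_zero_one_nhds_of_isClosed (n := ⊤)
      (modelWithCornersSelf ℝ (EuclideanSpace ℝ (Fin (M+2))))
      (s := Uᶜ) (t := tsupport u) hUo.isClosed_compl (isClosed_tsupport u)
      (Set.disjoint_left.mpr fun x hxc hxK => hxc (hKU hxK))
  have hχsm : ContDiff ℝ 1 (χ : EuclideanSpace ℝ (Fin (M+2)) → ℝ) :=
    (contMDiff_iff_contDiff.mp χ.contMDiff).of_le (mod_cast le_top)
  have h0 : ∀ x ∉ U, ∀ᶠ y in nhds x, χ y = 0 := fun x hx =>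
    eventually_nhdsSet_iff_forall.mp hχ0 x hx
  have h1 : ∀ x ∈ tsupport u, ∀ᶠ y in nhds x, χ y = 1 := fun x hx =>
    eventually_nhdsSet_iff_forall.mp hχ1 x hx
  have hUr : ∀ x ∈ U, 0 < ‖x‖ ∧ ‖x‖ < 1 := by
    intro x hx
    exact ⟨norm_pos_iff.mpr hx.2, by simpa [mem_ball_zero_iff] using hx.1⟩
  -- the vector field V and its derivative DV
  set V : EuclideanSpace ℝ (Fin (M+2)) → EuclideanSpace ℝ (Fin (M+2)) :=
    fun x => hardyAux_hh (M+2) (‖x‖^2) • x with hVdef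
  set DV : (x : EuclideanSpace ℝ (Fin (M+2))) →
      (EuclideanSpace ℝ (Fin (M+2)) →L[ℝ] EuclideanSpace ℝ (Fin (M+2))) := fun x =>
    hardyAux_hh (M+2) (‖x‖^2) • ContinuousLinearMap.id ℝ (EuclideanSpace ℝ (Fin (M+2))) +
      (hardyAux_hh' (M+2) (‖x‖^2) •
        ((2:ℕ) • ((innerSL ℝ x).comp
          (ContinuousLinearMap.id ℝ (EuclideanSpace ℝ (Fin (M+2))))))).smulRight x with hDVdef
  have hnormsq : ∀ x : EuclideanSpace ℝ (Fin (M+2)),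
      HasFDerivAt (fun y : EuclideanSpace ℝ (Fin (M+2)) => ‖y‖^2)
        ((2:ℕ) • ((innerSL ℝ x).comp
          (ContinuousLinearMap.id ℝ (EuclideanSpace ℝ (Fin (M+2)))))) x :=
    fun x => (hasFDerivAt_id x).norm_sq
  have hVd : ∀ x : EuclideanSpace ℝ (Fin (M+2)), 0 < ‖x‖ → ‖x‖ < 1 →
      HasFDerivAt V (DV x) x := by
    intro x hr0 hr1
    have hs0 : (0:ℝ) < ‖x‖^2 := by positivity
    have hs1 : ‖x‖^2 < 1 := by nlinarith
    have hc := (hardyAux_hh_hasDerivAt (M+2) hs0 hs1).comp_hasFDerivAt x (hnormsq x)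
    exact hc.smul (hasFDerivAt_id x)
  have hVc : ∀ x : EuclideanSpace ℝ (Fin (M+2)), 0 < ‖x‖ → ‖x‖ < 1 →
      ContDiffAt ℝ 1 V x := by
    intro x hr0 hr1
    have hs0 : (0:ℝ) < ‖x‖^2 := by positivity
    have hs1 : ‖x‖^2 < 1 := by nlinarith
    have hns : ContDiff ℝ 1 (fun y : EuclideanSpace ℝ (Fin (M+2)) => ‖y‖^2) :=
      ContDiff.norm_sq ℝ contDiff_id
    exact ((hardyAux_hh_contDiffAt (M+2) hs0 hs1).comp x hns.contDiffAt).smul contDiffAt_id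
  set χV : EuclideanSpace ℝ (Fin (M+2)) → EuclideanSpace ℝ (Fin (M+2)) :=
    fun x => χ x • V x with hχVdef
  have hχVsm : ContDiff ℝ 1 χV := by
    rw [contDiff_iff_contDiffAt]
    intro x
    by_cases hx : x ∈ U
    · exact (hχsm.contDiffAt).smul (hVc x (hUr x hx).1 (hUr x hx).2)
    · have : χV =ᶠ[nhds x] (fun _ => 0) := by
        filter_upwards [h0 x hx] with y hy
        simp [hχVdef, hy]
      exact ContDiffAt.congr_of_eventuallyEq contDiffAt_const this
  have hχVK : ∀ x ∈ tsupport u, χV =ᶠ[nhds x] V := by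
    intro x hx
    filter_upwards [h1 x hx] with y hy
    simp [hχVdef, hy]
  -- F = |u|^N and its properties
  set F : EuclideanSpace ℝ (Fin (M+2)) → ℝ := fun x => |u x| ^ (M+2) with hFdef
  have hφ : ContDiff ℝ 1 (fun t : ℝ => |t| ^ (M+2)) := by
    rw [contDiff_one_iff_deriv]
    constructor
    · exact fun t => (hardyAux_absPow_hasDerivAt M t).differentiableAt
    · have : (deriv fun t : ℝ => |t| ^ (M+2)) = fun t => ((M:ℝ)+2) * t * |t|^M := by
        funext t; exact (hardyAux_absPow_hasDerivAt M t).deriv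
      rw [this]
      exact (continuous_const.mul continuous_id').mul (continuous_abs.pow M)
  have hFsm : ContDiff ℝ 1 F := hφ.comp hu
  have hFsupp : HasCompactSupport F := hsupp.comp_left (g := fun t => |t| ^ (M+2)) (by simp)
  have hFd : ∀ x, HasFDerivAt F ((((M:ℝ)+2) * u x * |u x|^M) • fderiv ℝ u x) x := fun x =>
    (hardyAux_absPow_hasDerivAt M (u x)).comp_hasFDerivAt x
      (hu.differentiable one_ne_zero x).hasFDerivAt
  have hu0 : ∀ x ∉ tsupport u, u x = 0 := fun x hx => image_eq_zero_of_notMem_tsupport hx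
  have hF0 : ∀ x ∉ tsupport u, F x = 0 := by
    intro x hx; rw [hFdef]; simp [hu0 x hx]
  have hdu0 : ∀ x ∉ tsupport u, fderiv ℝ u x = 0 := by
    intro x hx
    by_contra h
    exact hx (support_fderiv_subset ℝ (Function.mem_support.mpr h))
  have hFt : tsupport F ⊆ tsupport u := by
    apply closure_mono
    intro x hx
    rw [Function.mem_support] at hx ⊢
    intro h
    exact hx (by rw [hFdef]; simp [h])
  have hdF0 : ∀ x ∉ tsupport u, fderiv ℝ F x = 0 := by
    intro x hx
    by_contra h
    exact hx (hFt (support_fderiv_subset ℝ (Function.mem_support.mpr h)))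
  -- coordinates
  set e : Fin (M+2) → EuclideanSpace ℝ (Fin (M+2)) :=
    fun i => EuclideanSpace.single i (1:ℝ) with hedef
  set g : Fin (M+2) → EuclideanSpace ℝ (Fin (M+2)) → ℝ := fun i x => χV x i with hgdef
  have hgsm : ∀ i, ContDiff ℝ 1 (g i) := fun i =>
    (EuclideanSpace.proj (𝕜 := ℝ) i).contDiff.comp hχVsm
  -- integrability
  have hdgcont : ∀ i, Continuous fun x => fderiv ℝ (g i) x (e i) := fun i =>
    ((hgsm i).continuous_fderiv one_ne_zero).clm_apply continuous_const
  have hdFcont : ∀ i, Continuous fun x => fderiv ℝ F x (e i) := fun i =>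
    (hFsm.continuous_fderiv one_ne_zero).clm_apply continuous_const
  have hFcont : Continuous F := hFsm.continuous
  have hgcont : ∀ i, Continuous (g i) := fun i => (hgsm i).continuous
  have int1 : ∀ i, Integrable (fun x => F x * fderiv ℝ (g i) x (e i)) volume := by
    intro i
    exact (hFcont.mul (hdgcont i)).integrable_of_hasCompactSupport (hFsupp.mul_right)
  have int2 : ∀ i, Integrable (fun x => fderiv ℝ F x (e i) * g i x) volume := by
    intro i
    refine ((hdFcont i).mul (hgcont i)).integrable_of_hasCompactSupport ?_
    refine HasCompactSupport.mul_right ?_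
    exact (hFsupp.fderiv (𝕜 := ℝ)).comp_left
      (g := fun L : EuclideanSpace ℝ (Fin (M+2)) →L[ℝ] ℝ => L (e i)) rfl
  have int3 : ∀ i, Integrable (fun x => F x * g i x) volume :=
    fun i => (hFcont.mul (hgcont i)).integrable_of_hasCompactSupport (hFsupp.mul_right)
  -- integration by parts
  have ibp : ∀ i, ∫ x, F x * fderiv ℝ (g i) x (e i) =
      - ∫ x, fderiv ℝ F x (e i) * g i x := fun i =>
    integral_mul_fderiv_eq_neg_fderiv_mul_of_integrable (int2 i) (int1 i) (int3 i)
      (fun x _ => hFsm.differentiable one_ne_zero x) (fun x _ => (hgsm i).differentiable one_ne_zero x)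
  have key : ∫ x, F x * (∑ i, fderiv ℝ (g i) x (e i)) =
      - ∫ x, fderiv ℝ F x (χV x) := by
    calc ∫ x, F x * (∑ i, fderiv ℝ (g i) x (e i))
        = ∫ x, ∑ i, F x * fderiv ℝ (g i) x (e i) := by
          congr 1; funext x; rw [Finset.mul_sum]
      _ = ∑ i, ∫ x, F x * fderiv ℝ (g i) x (e i) :=
          integral_finset_sum _ (fun i _ => int1 i)
      _ = ∑ i, - ∫ x, fderiv ℝ F x (e i) * g i x := by
          exact Finset.sum_congr rfl fun i _ => ibp i
      _ = - ∑ i, ∫ x, fderiv ℝ F x (e i) * g i x := by rw [Finset.sum_neg_distrib]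
      _ = - ∫ x, ∑ i, fderiv ℝ F x (e i) * g i x := by
          rw [integral_finset_sum _ (fun i _ => int2 i)]
      _ = - ∫ x, fderiv ℝ F x (χV x) := by
          congr 1
          exact integral_congr_ae (Filter.Eventually.of_forall fun x =>
            hardyAux_clm_sum_apply (M+2) (fderiv ℝ F x) (χV x))
  -- the weight function B
  set Bf : EuclideanSpace ℝ (Fin (M+2)) → ℝ :=
    fun x => |u x| / (‖x‖ * |Real.log ‖x‖|) with hBdef
  have hBnn : ∀ x, 0 ≤ Bf x := fun x => div_nonneg (abs_nonneg _) (by positivity)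
  have hB0 : ∀ x ∉ tsupport u, Bf x = 0 := by
    intro x hx; rw [hBdef]; simp [hu0 x hx]
  -- evaluation of DV
  have hDVeval : ∀ (x v : EuclideanSpace ℝ (Fin (M+2))) (i : Fin (M+2)), (DV x v) i =
      hardyAux_hh (M+2) (‖x‖^2) * v i +
        (hardyAux_hh' (M+2) (‖x‖^2) * (2 * (inner ℝ x v : ℝ))) * x i := by
    intro x v i
    rw [hDVdef]
    simp only [ContinuousLinearMap.add_apply, ContinuousLinearMap.smul_apply,
      ContinuousLinearMap.smulRight_apply, ContinuousLinearMap.comp_apply,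
      ContinuousLinearMap.coe_id', id_eq, innerSL_apply_apply, PiLp.add_apply,
      PiLp.smul_apply, smul_eq_mul, two_smul]
    ring
  -- fderiv of g i on the support
  have hfg : ∀ x ∈ tsupport u, ∀ i, fderiv ℝ (g i) x (e i) = (DV x (e i)) i := by
    intro x hx i
    obtain ⟨hr0, hr1⟩ := hUr x (hKU hx)
    have hev : (g i) =ᶠ[nhds x] fun y => V y i := by
      filter_upwards [hχVK x hx] with y hy
      rw [hgdef]
      simp only []
      rw [hy]
    rw [Filter.EventuallyEq.fderiv_eq hev]
    have hco : HasFDerivAt (fun y => V y i)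
        ((EuclideanSpace.proj (𝕜 := ℝ) i).comp (DV x)) x :=
      ((EuclideanSpace.proj (𝕜 := ℝ) i).hasFDerivAt).comp x (hVd x hr0 hr1)
    rw [hco.fderiv]
    rfl
  -- divergence of χV on the support
  have hdiv : ∀ x ∈ tsupport u, ∑ i, fderiv ℝ (g i) x (e i) =
      ((M:ℝ)+1) * (((‖x‖ * (-Real.log ‖x‖)) ^ (M+2))⁻¹) := by
    intro x hx
    obtain ⟨hr0, hr1⟩ := hUr x (hKU hx)
    have hei : ∀ i : Fin (M+2), (e i) i = 1 := by
      intro i; rw [hedef]; simp [EuclideanSpace.single_apply]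
    have hinner : ∀ i : Fin (M+2), (inner ℝ x (e i) : ℝ) = x i := by
      intro i; rw [hedef]; simp [EuclideanSpace.inner_single_right]
    have hxx : ∑ i, x i * x i = ‖x‖^2 := by
      rw [← real_inner_self_eq_norm_sq, PiLp.inner_apply]
      simp [RCLike.inner_apply, pow_two]
    have hsum : ∑ i, fderiv ℝ (g i) x (e i) =
        2 * hardyAux_hh' (M+2) (‖x‖^2) * ‖x‖^2 +
          ((M:ℝ)+2) * hardyAux_hh (M+2) (‖x‖^2) := by
      have h1 : ∀ i : Fin (M+2), fderiv ℝ (g i) x (e i) =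
          hardyAux_hh (M+2) (‖x‖^2) +
            (hardyAux_hh' (M+2) (‖x‖^2) * (2 * x i)) * x i := by
        intro i
        rw [hfg x hx i, hDVeval, hei i, hinner i, mul_one]
      rw [Finset.sum_congr rfl fun i _ => h1 i, Finset.sum_add_distrib,
        Finset.sum_const, Finset.card_univ]
      have h2 : ∑ i : Fin (M+2), (hardyAux_hh' (M+2) (‖x‖^2) * (2 * x i)) * x i =
          2 * hardyAux_hh' (M+2) (‖x‖^2) * ∑ i, x i * x i := by
        rw [Finset.mul_sum]
        exact Finset.sum_congr rfl fun i _ => by ring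
      rw [h2, hxx]
      simp [Fintype.card_fin]
      push_cast
      ring
    rw [hsum]
    exact hardyAux_div_formula M hr0 hr1
  -- pointwise identity P1
  have P1 : ∀ x, F x * (∑ i, fderiv ℝ (g i) x (e i)) = ((M:ℝ)+1) * (Bf x)^(M+2) := by
    intro x
    by_cases hx : x ∈ tsupport u
    · obtain ⟨hr0, hr1⟩ := hUr x (hKU hx)
      have hlog : Real.log ‖x‖ < 0 := Real.log_neg hr0 hr1
      rw [hdiv x hx, hBdef]
      simp only []
      rw [div_pow, abs_of_neg hlog, hFdef, div_eq_mul_inv]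
      ring
    · rw [hF0 x hx, hB0 x hx]
      rw [zero_pow (by omega), zero_mul, mul_zero]
  -- pointwise bound P2
  have hgradnorm : ∀ x, ‖gradient u x‖ = ‖fderiv ℝ u x‖ := fun x => by
    rw [gradient]; exact LinearIsometryEquiv.norm_map _ _
  have P2 : ∀ x, |fderiv ℝ F x (χV x)| ≤
      ((M:ℝ)+2) * (‖fderiv ℝ u x‖ * (Bf x)^(M+1)) := by
    intro x
    by_cases hx : x ∈ tsupport u
    · obtain ⟨hr0, hr1⟩ := hUr x (hKU hx)
      have hlog : Real.log ‖x‖ < 0 := Real.log_neg hr0 hr1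
      have hχVx : χV x = V x := (hχVK x hx).eq_of_nhds
      rw [(hFd x).fderiv, hχVx, ContinuousLinearMap.smul_apply, smul_eq_mul, abs_mul]
      have hb1 : |fderiv ℝ u x (V x)| ≤ ‖fderiv ℝ u x‖ * ‖V x‖ := by
        calc |fderiv ℝ u x (V x)| = ‖fderiv ℝ u x (V x)‖ := (Real.norm_eq_abs _).symm
          _ ≤ ‖fderiv ℝ u x‖ * ‖V x‖ := ContinuousLinearMap.le_opNorm _ _
      have hVnorm : ‖V x‖ = ((‖x‖ * (-Real.log ‖x‖)) ^ (M+1))⁻¹ := by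
        rw [hVdef]
        simp only []
        rw [norm_smul, Real.norm_eq_abs, abs_of_pos (hardyAux_hh_sq_pos M hr0 hr1)]
        exact hardyAux_norm_V_eq M hr0 hr1
      have hc : |((M:ℝ)+2) * u x * |u x|^M| = ((M:ℝ)+2) * |u x|^(M+1) := by
        rw [abs_mul, abs_mul, abs_of_nonneg (show (0:ℝ) ≤ (M:ℝ)+2 by positivity),
          abs_pow, abs_abs, pow_succ]
        ring
      have hBpow : (Bf x)^(M+1) = |u x|^(M+1) * ((‖x‖ * (-Real.log ‖x‖)) ^ (M+1))⁻¹ := by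
        rw [hBdef]
        simp only []
        rw [div_pow, abs_of_neg hlog, div_eq_mul_inv]
      calc |((M:ℝ)+2) * u x * |u x|^M| * |fderiv ℝ u x (V x)|
          ≤ |((M:ℝ)+2) * u x * |u x|^M| * (‖fderiv ℝ u x‖ * ‖V x‖) :=
            mul_le_mul_of_nonneg_left hb1 (abs_nonneg _)
        _ = ((M:ℝ)+2) * (‖fderiv ℝ u x‖ * (Bf x)^(M+1)) := by
            rw [hc, hVnorm, hBpow]; ring
    · rw [hdF0 x hx]
      simp only [ContinuousLinearMap.zero_apply, abs_zero]
      exact mul_nonneg (by positivity)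
        (mul_nonneg (norm_nonneg _) (pow_nonneg (hBnn x) _))
  -- continuity and support of Bf
  have hBcont : Continuous Bf := by
    rw [continuous_iff_continuousAt]
    intro x
    by_cases hx : x ∈ U
    · obtain ⟨hr0, hr1⟩ := hUr x hx
      have hlog : Real.log ‖x‖ < 0 := Real.log_neg hr0 hr1
      have hden : ‖x‖ * |Real.log ‖x‖| ≠ 0 :=
        mul_ne_zero hr0.ne' (abs_ne_zero.mpr hlog.ne)
      apply ContinuousAt.div
      · exact (continuous_abs.comp hu.continuous).continuousAt
      · exact continuous_norm.continuousAt.mul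
          (continuous_abs.continuousAt.comp
            ((Real.continuousAt_log hr0.ne').comp continuous_norm.continuousAt))
      · exact hden
    · have hxn : x ∉ tsupport u := fun h => hx (hKU h)
      have hev : Bf =ᶠ[nhds x] fun _ => 0 := by
        filter_upwards [(isClosed_tsupport u).isOpen_compl.mem_nhds hxn] with y hy
        rw [hBdef]; simp [hu0 y hy]
      exact (continuousAt_congr hev).2 continuousAt_const
  have hBsupp : HasCompactSupport Bf := HasCompactSupport.intro hK hB0
  -- A-function
  have hAcont : Continuous fun x : EuclideanSpace ℝ (Fin (M+2)) => ‖fderiv ℝ u x‖ :=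
    (hu.continuous_fderiv one_ne_zero).norm
  have hA0 : ∀ x ∉ tsupport u, ‖fderiv ℝ u x‖ = 0 := fun x hx => by
    rw [hdu0 x hx]; simp
  have hAsupp : HasCompactSupport fun x : EuclideanSpace ℝ (Fin (M+2)) =>
      ‖fderiv ℝ u x‖ := HasCompactSupport.intro hK hA0
  -- the main integrals
  set J1 := ∫ x : EuclideanSpace ℝ (Fin (M+2)), ‖fderiv ℝ u x‖^(M+2) with hJ1
  set J2 := ∫ x : EuclideanSpace ℝ (Fin (M+2)), (Bf x)^(M+2) with hJ2
  have intA : Integrable (fun x : EuclideanSpace ℝ (Fin (M+2)) =>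
      ‖fderiv ℝ u x‖^(M+2)) volume :=
    (hAcont.pow _).integrable_of_hasCompactSupport
      (HasCompactSupport.intro hK fun x hx => by simp only [Pi.pow_apply]; rw [hA0 x hx, zero_pow (by omega)])
  have intB : Integrable (fun x => (Bf x)^(M+2)) volume :=
    (hBcont.pow _).integrable_of_hasCompactSupport
      (HasCompactSupport.intro hK fun x hx => by simp only [Pi.pow_apply]; rw [hB0 x hx, zero_pow (by omega)])
  have intAB : Integrable (fun x => ((M:ℝ)+2) * (‖fderiv ℝ u x‖ * (Bf x)^(M+1))) volume := by
    refine (continuous_const.mul (hAcont.mul (hBcont.pow _))).integrable_of_hasCompactSupport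
      (HasCompactSupport.intro hK fun x hx => ?_)
    simp only [Pi.mul_apply, Pi.pow_apply]
    rw [hA0 x hx, zero_mul, mul_zero]
  have intabs : Integrable (fun x => |fderiv ℝ F x (χV x)|) volume := by
    refine (((hFsm.continuous_fderiv one_ne_zero).clm_apply
      hχVsm.continuous).abs).integrable_of_hasCompactSupport
      (HasCompactSupport.intro hK fun x hx => ?_)
    rw [hdF0 x hx]
    simp
  have intYoung : Integrable (fun x =>
      (((M:ℝ)+2)/((M:ℝ)+1))^(M+1) * ‖fderiv ℝ u x‖^(M+2) +
        (((M:ℝ)+1)^2/((M:ℝ)+2)) * (Bf x)^(M+2)) volume :=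
    (intA.const_mul _).add (intB.const_mul _)
  -- the main inequality
  have main : ((M:ℝ)+1) * J2 ≤
      (((M:ℝ)+2)/((M:ℝ)+1))^(M+1) * J1 + (((M:ℝ)+1)^2/((M:ℝ)+2)) * J2 := by
    have e1 : ((M:ℝ)+1) * J2 = ∫ x, F x * (∑ i, fderiv ℝ (g i) x (e i)) := by
      rw [hJ2, ← integral_const_mul]
      exact integral_congr_ae (Filter.Eventually.of_forall fun x => (P1 x).symm)
    calc ((M:ℝ)+1) * J2 = - ∫ x, fderiv ℝ F x (χV x) := by rw [e1, key]
      _ ≤ |∫ x, fderiv ℝ F x (χV x)| := neg_le_abs _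
      _ ≤ ∫ x, |fderiv ℝ F x (χV x)| := by
          simpa [Real.norm_eq_abs] using
            norm_integral_le_integral_norm (μ := volume)
              (fun x => fderiv ℝ F x (χV x))
      _ ≤ ∫ x, ((M:ℝ)+2) * (‖fderiv ℝ u x‖ * (Bf x)^(M+1)) :=
          integral_mono intabs intAB (fun x => P2 x)
      _ ≤ ∫ x, ((((M:ℝ)+2)/((M:ℝ)+1))^(M+1) * ‖fderiv ℝ u x‖^(M+2) +
            (((M:ℝ)+1)^2/((M:ℝ)+2)) * (Bf x)^(M+2)) :=
          integral_mono intAB intYoung (fun x => hardyAux_young M (norm_nonneg _) (hBnn x))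
      _ = (((M:ℝ)+2)/((M:ℝ)+1))^(M+1) * J1 + (((M:ℝ)+1)^2/((M:ℝ)+2)) * J2 := by
          rw [integral_add (intA.const_mul _) (intB.const_mul _),
            integral_const_mul, integral_const_mul, hJ1, hJ2]
  -- conclude
  have hm2 : (0:ℝ) < (M:ℝ)+2 := by positivity
  have hm1 : (0:ℝ) < (M:ℝ)+1 := by positivity
  have hstep : (((M:ℝ)+1)/((M:ℝ)+2)) * J2 ≤ (((M:ℝ)+2)/((M:ℝ)+1))^(M+1) * J1 := by
    have hcoeff : ((M:ℝ)+1)^2/((M:ℝ)+2) = ((M:ℝ)+1) - ((M:ℝ)+1)/((M:ℝ)+2) := by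
      field_simp
      ring
    rw [hcoeff] at main
    linarith
  have hfinal : (((M:ℝ)+1)/((M:ℝ)+2))^(M+2) * J2 ≤ J1 := by
    have h := mul_le_mul_of_nonneg_left hstep
      (le_of_lt (pow_pos (div_pos hm1 hm2) (M+1)))
    calc (((M:ℝ)+1)/((M:ℝ)+2))^(M+2) * J2
        = (((M:ℝ)+1)/((M:ℝ)+2))^(M+1) * ((((M:ℝ)+1)/((M:ℝ)+2)) * J2) := by
          rw [pow_succ]; ring
      _ ≤ (((M:ℝ)+1)/((M:ℝ)+2))^(M+1) * ((((M:ℝ)+2)/((M:ℝ)+1))^(M+1) * J1) := h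
      _ = J1 := by
          rw [← mul_assoc, ← mul_pow]
          have hone : ((M:ℝ)+1)/((M:ℝ)+2) * (((M:ℝ)+2)/((M:ℝ)+1)) = 1 := by
            field_simp
          rw [hone, one_pow, one_mul]
  -- translate the goal
  have hball : tsupport u ⊆ Metric.ball (0 : EuclideanSpace ℝ (Fin (M+2))) 1 :=
    fun x hx => (hKU hx).1
  have hLHS : ∫ x in Metric.ball (0 : EuclideanSpace ℝ (Fin (M+2))) 1,
      ‖gradient u x‖ ^ (M+2) ∂volume = J1 := by
    calc ∫ x in Metric.ball (0 : EuclideanSpace ℝ (Fin (M+2))) 1,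
        ‖gradient u x‖ ^ (M+2) ∂volume
        = ∫ x in Metric.ball (0 : EuclideanSpace ℝ (Fin (M+2))) 1,
            ‖fderiv ℝ u x‖ ^ (M+2) ∂volume :=
          integral_congr_ae (Filter.Eventually.of_forall fun x => by simp only [hgradnorm])
      _ = J1 := by
          rw [hJ1]
          exact setIntegral_eq_integral_of_forall_compl_eq_zero fun x hx => by
            rw [hdu0 x (fun h => hx (hball h))]
            simp [zero_pow]
  have hRHS : ∫ x in Metric.ball (0 : EuclideanSpace ℝ (Fin (M+2))) 1,
      |u x| ^ (M+2) / (‖x‖ ^ (M+2) * |Real.log ‖x‖| ^ (M+2)) ∂volume = J2 := by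
    have hpt : ∀ x : EuclideanSpace ℝ (Fin (M+2)),
        |u x| ^ (M+2) / (‖x‖ ^ (M+2) * |Real.log ‖x‖| ^ (M+2)) = (Bf x)^(M+2) := by
      intro x
      rw [hBdef]
      simp only []
      rw [div_pow, mul_pow]
    calc ∫ x in Metric.ball (0 : EuclideanSpace ℝ (Fin (M+2))) 1,
        |u x| ^ (M+2) / (‖x‖ ^ (M+2) * |Real.log ‖x‖| ^ (M+2)) ∂volume
        = ∫ x in Metric.ball (0 : EuclideanSpace ℝ (Fin (M+2))) 1, (Bf x)^(M+2) ∂volume :=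
          integral_congr_ae (Filter.Eventually.of_forall fun x => by simp only [hpt])
      _ = J2 := by
          rw [hJ2]
          exact setIntegral_eq_integral_of_forall_compl_eq_zero fun x hx => by
            rw [hB0 x (fun h => hx (hball h)), zero_pow (by omega)]
  have hcast : (((M+2:ℕ):ℝ) - 1)/((M+2:ℕ):ℝ) = ((M:ℝ)+1)/((M:ℝ)+2) := by
    push_cast; ring
  rw [ge_iff_le, hLHS, hRHS, hcast]
  exact hfinal
end
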